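/- arXiv:1602.00176 — 3 statements merged into one kernel-verified Lean document; each statement's English description precedes it below -/
import Mathlib

section
/- Let F(n) be the n-th Fibonacci number. Then lim_{n→∞} F(5^n) = 0 in ℤ_5; in fact ν_5(F(5^n)) = n for all n ≥ 0, where ν_5 is the 5-adic valuation. -/
open Filter Topology

instance : Fact (Nat.Prime 5) := ⟨by norm_num⟩

private lemma cass (n : ℕ) :
    ((Nat.fib (n + 1) : ℤ)) ^ 2 - (Nat.fib (n + 1) : ℤ) * Nat.fib n - (Nat.fib n : ℤ) ^ 2
      = (-1 : ℤ) ^ n := by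
  induction n with
  | zero => simp
  | succ n ih =>
    have h : (Nat.fib (n + 2) : ℤ) = Nat.fib n + Nat.fib (n + 1) := by
      rw [Nat.fib_add_two]; push_cast; ring
    rw [h, pow_succ]
    linear_combination (-1 : ℤ) * ih

private lemma key (n : ℕ) :
    (Nat.fib (5 * n) : ℤ) = 25 * (Nat.fib n : ℤ) ^ 5
      + 25 * (-1 : ℤ) ^ n * (Nat.fib n : ℤ) ^ 3 + 5 * (Nat.fib n : ℤ) := by
  set x : ℤ := (Nat.fib n : ℤ) with hx
  set y : ℤ := (Nat.fib (n + 1) : ℤ) with hy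
  have hle1 : Nat.fib n ≤ Nat.fib (n + 1) := Nat.fib_mono (by omega)
  have hle : Nat.fib n ≤ 2 * Nat.fib (n + 1) := by omega
  have h2 : (Nat.fib (2 * n) : ℤ) = x * (2 * y - x) := by
    rw [Nat.fib_two_mul]; push_cast [hle]; ring
  have h2' : (Nat.fib (2 * n + 1) : ℤ) = y ^ 2 + x ^ 2 := by
    rw [Nat.fib_two_mul_add_one]; push_cast; ring
  have hle2' : Nat.fib (2 * n) ≤ Nat.fib (2 * n + 1) := Nat.fib_mono (by omega)
  have hle2 : Nat.fib (2 * n) ≤ 2 * Nat.fib (2 * n + 1) := by omega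
  have h4 : (Nat.fib (4 * n) : ℤ)
      = (Nat.fib (2 * n) : ℤ) * (2 * (Nat.fib (2 * n + 1) : ℤ) - Nat.fib (2 * n)) := by
    have : 4 * n = 2 * (2 * n) := by ring
    rw [this, Nat.fib_two_mul]; push_cast [hle2]; ring
  have h4' : (Nat.fib (4 * n + 1) : ℤ)
      = (Nat.fib (2 * n + 1) : ℤ) ^ 2 + (Nat.fib (2 * n) : ℤ) ^ 2 := by
    have : 4 * n + 1 = 2 * (2 * n) + 1 := by ring
    rw [this, Nat.fib_two_mul_add_one]; push_cast; ring
  have h5' : (Nat.fib (5 * n + 1) : ℤ)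
      = x * Nat.fib (4 * n) + y * Nat.fib (4 * n + 1) := by
    have : 5 * n + 1 = n + 4 * n + 1 := by ring
    rw [this, Nat.fib_add]; push_cast; ring
  have h5'' : (Nat.fib (5 * n + 2) : ℤ)
      = x * Nat.fib (4 * n + 1) + y * Nat.fib (4 * n + 1 + 1) := by
    have : 5 * n + 2 = n + (4 * n + 1) + 1 := by ring
    rw [this, Nat.fib_add]; push_cast; ring
  have h4'' : (Nat.fib (4 * n + 1 + 1) : ℤ) = Nat.fib (4 * n) + Nat.fib (4 * n + 1) := by
    rw [Nat.fib_add_two]; push_cast; ring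
  have h50 : (Nat.fib (5 * n) : ℤ) = Nat.fib (5 * n + 2) - Nat.fib (5 * n + 1) := by
    have := Nat.fib_add_two (n := 5 * n)
    push_cast [this]; ring
  have hc : y ^ 2 - y * x - x ^ 2 = (-1 : ℤ) ^ n := cass n
  have he : ((-1 : ℤ) ^ n) ^ 2 = 1 := by
    rw [← pow_mul, mul_comm, pow_mul]; norm_num
  rw [h50, h5'', h5', h4'', h4, h4', h2, h2']
  linear_combination (25 * x ^ 3 + 5 * x * (y ^ 2 - y * x - x ^ 2 + (-1 : ℤ) ^ n)) * hc
    + 5 * x * he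

private lemma val_fib (n : ℕ) : padicValNat 5 (Nat.fib (5 ^ n)) = n := by
  induction n with
  | zero => simp
  | succ n ih =>
    have hpow : (5 : ℕ) ^ (n + 1) = 5 * 5 ^ n := by ring
    set x : ℤ := (Nat.fib (5 ^ n) : ℤ) with hxdef
    have hxpos : 0 < Nat.fib (5 ^ n) := Nat.fib_pos.2 (Nat.pow_pos (by norm_num))
    have hx : x ≠ 0 := by positivity
    have hodd : Odd (5 ^ n) := Odd.pow ⟨2, by norm_num⟩
    have hkey : (Nat.fib (5 * 5 ^ n) : ℤ) = x * (5 * (5 * x ^ 4 - 5 * x ^ 2 + 1)) := by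
      rw [key (5 ^ n), hodd.neg_one_pow]; ring
    set u : ℤ := 5 * x ^ 4 - 5 * x ^ 2 + 1 with hu
    have hnd : ¬ (5 : ℤ) ∣ u := by
      intro h
      have h2 : (5 : ℤ) ∣ 5 * x ^ 4 - 5 * x ^ 2 := ⟨x ^ 4 - x ^ 2, by ring⟩
      have : (5 : ℤ) ∣ 1 := by
        have := dvd_sub h h2
        simpa [hu] using this
      norm_num at this
    have hune : u ≠ 0 := by intro h0; exact hnd (by rw [h0]; exact dvd_zero 5)
    have hvu : padicValInt 5 u = 0 := padicValInt.eq_zero_of_not_dvd (by exact_mod_cast hnd)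
    have hv5 : padicValInt 5 (5 : ℤ) = 1 := by
      have := padicValInt_self (p := 5)
      simpa using this
    calc padicValNat 5 (Nat.fib (5 ^ (n + 1)))
        = padicValInt 5 ((Nat.fib (5 ^ (n + 1)) : ℤ)) := (padicValInt.of_nat).symm
      _ = padicValInt 5 (x * (5 * u)) := by rw [hpow, hkey]
      _ = padicValInt 5 x + (padicValInt 5 (5 : ℤ) + padicValInt 5 u) := by
          rw [padicValInt.mul hx (by exact mul_ne_zero (by norm_num) hune),
            padicValInt.mul (by norm_num) hune]
      _ = n + 1 := by
          rw [hvu, hv5, hxdef, padicValInt.of_nat, ih]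
  
/-- `lim_{n→∞} F(5^n) = 0` in `ℤ_5`; in fact `ν_5(F(5^n)) = n` for all `n ≥ 0`. -/
theorem stmt_10 :
    Tendsto (fun n : ℕ => ((Nat.fib (5 ^ n) : ℕ) : ℤ_[5])) atTop (𝓝 0) ∧
      ∀ n : ℕ, padicValNat 5 (Nat.fib (5 ^ n)) = n := by
  refine ⟨?_, val_fib⟩
  rw [tendsto_zero_iff_norm_tendsto_zero]
  have hb : ∀ n : ℕ, ‖((Nat.fib (5 ^ n) : ℕ) : ℤ_[5])‖ ≤ (5 : ℝ) ^ (-(n : ℤ)) := by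
    intro n
    have hdvd : (5 : ℕ) ^ n ∣ Nat.fib (5 ^ n) := by
      conv_lhs => rw [← val_fib n]
      exact pow_padicValNat_dvd
    have hdvd' : ((5 : ℤ)) ^ n ∣ ((Nat.fib (5 ^ n) : ℤ)) := by exact_mod_cast hdvd
    have := (PadicInt.norm_int_le_pow_iff_dvd (p := 5)
      (k := (Nat.fib (5 ^ n) : ℤ)) (n := n)).2 (by exact_mod_cast hdvd')
    simpa using this
  refine squeeze_zero (fun n => norm_nonneg _) hb ?_
  have : (fun n : ℕ => (5 : ℝ) ^ (-(n : ℤ))) = fun n : ℕ => (5⁻¹ : ℝ) ^ n := by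
    funext n
    rw [zpow_neg, zpow_natCast, inv_pow]
  rw [this]
  exact tendsto_pow_atTop_nhds_zero_of_lt_one (by norm_num) (by norm_num)
end

section
/- Let p be a prime and q as follows: q = 1 if e < p−1 and q = p^{⌈log_p(e+1)⌉} if e ≥ p−1, where e is the ramification index of a finite extension K/ℚ_p. Let g ∈ ℤ_p[x] be monic with a root β ∈ K satisfying |β|_p = 1, and let ω(β) be the (p^f − 1)-st root of unity in O_K congruent to β modulo a uniformizer (f = [K:ℚ_p]/e). Then |(β/ω(β))^q − 1|_p < p^{−1/(p−1)}. -/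
open Polynomial

/-- Lemma on `q`: for `K/ℚ_p` finite with ramification index `e` and residue degree `f`,
`β ∈ K` a root of a monic `g ∈ ℤ_p[x]` with `‖β‖ = 1`, and `ω(β)` the `(p^f − 1)`-st root
of unity congruent to `β` modulo a uniformizer `π`, setting `q = 1` if `e < p − 1` and
`q = p^⌈log_p(e+1)⌉` otherwise, we have `‖(β/ω(β))^q − 1‖ < p^(−1/(p−1))`. -/
theorem stmt_17 (p : ℕ) [Fact p.Prime]
    (K : Type*) [NontriviallyNormedField K] [NormedAlgebra ℚ_[p] K]
    [FiniteDimensional ℚ_[p] K]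
    (hiso : ∀ x : ℚ_[p], ‖algebraMap ℚ_[p] K x‖ = ‖x‖)
    (e f : ℕ) (he : 1 ≤ e) (hef : e * f = Module.finrank ℚ_[p] K)
    (π : K) (hπ : ‖π‖ = (p : ℝ) ^ (-(1 : ℝ) / e))
    (hram : ∀ x : K, x ≠ 0 → ∃ n : ℤ, ‖x‖ = (p : ℝ) ^ ((n : ℝ) / e))
    (g : Polynomial ℤ_[p]) (hg : g.Monic) (β : K)
    (hβroot : Polynomial.aeval β (g.map (algebraMap ℤ_[p] ℚ_[p])) = 0)
    (hβ : ‖β‖ = 1)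
    (ω : K) (hω : ω ^ (p ^ f - 1) = 1) (hωβ : ‖β - ω‖ ≤ ‖π‖)
    (q : ℕ)
    (hq : q = if e < p - 1 then 1 else p ^ (⌈Real.logb p (e + 1)⌉₊)) :
    ‖(β / ω) ^ q - 1‖ < (p : ℝ) ^ (-(1 : ℝ) / (p - 1)) := by
  have hp := (Fact.out : p.Prime)
  have hp2 : 2 ≤ p := hp.two_le
  have hp1R : (1 : ℝ) < p := by exact_mod_cast hp.one_lt
  have hp0R : (0 : ℝ) < p := by positivity
  have hpm1 : (0 : ℝ) < (p : ℝ) - 1 := by linarith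
  have he0 : (0 : ℝ) < e := by exact_mod_cast he
  -- norms of naturals in K
  have hnat : ∀ n : ℕ, ‖(n : K)‖ = ‖(n : ℚ_[p])‖ := by
    intro n
    rw [← map_natCast (algebraMap ℚ_[p] K) n, hiso]
  have hnat1 : ∀ n : ℕ, ‖(n : K)‖ ≤ 1 := by
    intro n
    rw [hnat]
    exact_mod_cast Padic.norm_int_le_one (n : ℤ)
  have : IsUltrametricDist K :=
    IsUltrametricDist.isUltrametricDist_of_forall_norm_natCast_le_one hnat1
  have hpK : ‖(p : K)‖ = (p : ℝ)⁻¹ := by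
    rw [hnat]
    simpa using Padic.norm_p (p := p)
  set r : ℝ := (p : ℝ) ^ (-(1 : ℝ) / ((p : ℝ) - 1)) with hr
  have hrpos : 0 < r := Real.rpow_pos_of_pos hp0R _
  have hrlt1 : r < 1 := by
    apply Real.rpow_lt_one_of_one_lt_of_neg hp1R
    rw [div_neg_iff]; right; constructor <;> linarith
  -- the basic binomial estimate
  have step : ∀ x : K, ‖x - 1‖ ≤ 1 →
      ‖x ^ p - 1‖ ≤ max (‖x - 1‖ ^ p) ((p : ℝ)⁻¹ * ‖x - 1‖) := by
    intro x ht1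
    set t : K := x - 1 with htdef
    have expand : x ^ p - 1 = ∑ i ∈ Finset.range p, t ^ (i + 1) * (p.choose (i + 1) : K) := by
      have h1 : x ^ p = ∑ k ∈ Finset.range (p + 1), t ^ k * (p.choose k : K) := by
        rw [show x = t + 1 by rw [htdef]; ring, add_pow]
        simp
      rw [h1, Finset.sum_range_succ']
      simp
    rw [expand]
    apply IsUltrametricDist.norm_sum_le_of_forall_le_of_nonneg
    · positivity
    intro i hi
    have hi' : i + 1 ≤ p := Finset.mem_range.mp hi
    rw [norm_mul, norm_pow]
    rcases eq_or_lt_of_le hi' with hip | hip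
    · -- i + 1 = p
      rw [hip]
      simp only [Nat.choose_self, Nat.cast_one, norm_one, mul_one]
      exact le_max_left _ _
    · -- 1 ≤ i+1 < p : p divides the binomial coefficient
      have hdvd : p ∣ p.choose (i + 1) := hp.dvd_choose_self (Nat.succ_ne_zero i) hip
      obtain ⟨m, hm⟩ := hdvd
      have hCn : ‖((p.choose (i + 1) : ℕ) : K)‖ ≤ (p : ℝ)⁻¹ := by
        rw [hm]
        push_cast
        rw [norm_mul, hpK]
        calc (p : ℝ)⁻¹ * ‖(m : K)‖ ≤ (p : ℝ)⁻¹ * 1 := by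
              exact mul_le_mul_of_nonneg_left (hnat1 m) (by positivity)
          _ = (p : ℝ)⁻¹ := by ring
      refine le_max_of_le_right ?_
      have htpow : ‖t‖ ^ (i + 1) ≤ ‖t‖ :=
        pow_le_of_le_one (norm_nonneg t) ht1 (Nat.succ_ne_zero i)
      calc ‖t‖ ^ (i + 1) * ‖((p.choose (i + 1) : ℕ) : K)‖
          ≤ ‖t‖ * (p : ℝ)⁻¹ :=
            mul_le_mul htpow hCn (norm_nonneg _) (norm_nonneg t)
        _ = (p : ℝ)⁻¹ * ‖t‖ := by ring
  -- step B : stay below r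
  have stepB : ∀ x : K, ‖x - 1‖ < r → ‖x ^ p - 1‖ < r := by
    intro x hx
    have ht1 : ‖x - 1‖ ≤ 1 := le_of_lt (hx.trans hrlt1)
    refine (step x ht1).trans_lt (max_lt ?_ ?_)
    · calc ‖x - 1‖ ^ p < r ^ p :=
            pow_lt_pow_left₀ hx (norm_nonneg _) (by omega)
        _ ≤ r ^ 1 := pow_le_pow_of_le_one hrpos.le hrlt1.le (by omega)
        _ = r := pow_one r
    · calc (p : ℝ)⁻¹ * ‖x - 1‖ ≤ ‖x - 1‖ :=
            mul_le_of_le_one_left (norm_nonneg _) (by rw [inv_le_one_iff₀]; right; linarith)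
        _ < r := hx
  -- step A : multiply exponent by p as long as c ≤ 1/(p-1)
  have stepA : ∀ (x : K) (c : ℝ), 0 ≤ c → c ≤ 1 / ((p : ℝ) - 1) →
      ‖x - 1‖ ≤ (p : ℝ) ^ (-c) → ‖x ^ p - 1‖ ≤ (p : ℝ) ^ (-((p : ℝ) * c)) := by
    intro x c hc0 hc1 hx
    have hb1 : (p : ℝ) ^ (-c) ≤ 1 :=
      Real.rpow_le_one_of_one_le_of_nonpos hp1R.le (by linarith)
    have ht1 : ‖x - 1‖ ≤ 1 := hx.trans hb1
    refine (step x ht1).trans (max_le ?_ ?_)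
    · calc ‖x - 1‖ ^ p ≤ ((p : ℝ) ^ (-c)) ^ p :=
            pow_le_pow_left₀ (norm_nonneg _) hx p
        _ = (p : ℝ) ^ (-c * (p : ℕ)) := by
            rw [← Real.rpow_natCast ((p : ℝ) ^ (-c)) p, ← Real.rpow_mul hp0R.le]
        _ = (p : ℝ) ^ (-((p : ℝ) * c)) := by ring_nf
    · calc (p : ℝ)⁻¹ * ‖x - 1‖ ≤ (p : ℝ)⁻¹ * (p : ℝ) ^ (-c) :=
            mul_le_mul_of_nonneg_left hx (by positivity)
        _ = (p : ℝ) ^ (-(1 : ℝ) + -c) := by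
            rw [Real.rpow_add hp0R, Real.rpow_neg_one]
        _ ≤ (p : ℝ) ^ (-((p : ℝ) * c)) := by
            apply Real.rpow_le_rpow_left_iff hp1R |>.mpr
            have hc1' : c * ((p : ℝ) - 1) ≤ 1 := (le_div_iff₀ hpm1).mp hc1
            linarith
  -- basic facts about ω and u = β / ω
  have hf1 : 1 ≤ f := by
    rcases Nat.eq_zero_or_pos f with hf | hf
    · exfalso
      have hpos := Module.finrank_pos (R := ℚ_[p]) (M := K)
      rw [← hef, hf, mul_zero] at hpos
      exact lt_irrefl 0 hpos
    · exact hf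
  have hpf1 : 1 ≤ p ^ f - 1 := by
    have : 2 ≤ p ^ f := le_trans hp2 (Nat.le_self_pow (by omega) p)
    omega
  have hω0 : ω ≠ 0 := by
    intro h
    rw [h, zero_pow (by omega)] at hω
    exact zero_ne_one hω
  have hωn : ‖ω‖ = 1 := by
    have h1 : ‖ω‖ ^ (p ^ f - 1) = 1 := by rw [← norm_pow, hω, norm_one]
    by_contra hne
    rcases lt_or_gt_of_ne hne with hlt | hgt
    · have := pow_lt_one₀ (norm_nonneg ω) hlt (show p ^ f - 1 ≠ 0 by omega)
      rw [h1] at this; exact lt_irrefl 1 this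
    · have := one_lt_pow₀ hgt (by omega : p ^ f - 1 ≠ 0)
      rw [h1] at this; exact lt_irrefl 1 this
  set u : K := β / ω with hu
  have hu1 : ‖u - 1‖ ≤ (p : ℝ) ^ (-(1 : ℝ) / (e : ℝ)) := by
    have : u - 1 = (β - ω) / ω := by
      rw [eq_div_iff hω0, sub_mul, one_mul, hu, div_mul_cancel₀ _ hω0]
    rw [this, norm_div, hωn, div_one]
    rw [hπ] at hωβ
    exact_mod_cast hωβ
  rcases Nat.lt_or_ge e (p - 1) with hcase | hcase
  · -- q = 1
    rw [hq, if_pos hcase, pow_one]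
    have heR : (e : ℝ) < (p : ℝ) - 1 := by
      have : e + 1 < p := by omega
      have : (e : ℝ) + 1 < p := by exact_mod_cast this
      linarith
    refine hu1.trans_lt ?_
    rw [hr]
    apply Real.rpow_lt_rpow_left_iff hp1R |>.mpr
    rw [div_lt_div_iff₀ he0 hpm1]
    nlinarith
  · -- q = p ^ m
    rw [hq, if_neg (by omega)]
    set m : ℕ := ⌈Real.logb p (e + 1)⌉₊ with hm
    have hpme : (e : ℝ) + 1 ≤ (p : ℝ) ^ m := by
      have h1 : Real.logb p (e + 1) ≤ (m : ℝ) := Nat.le_ceil _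
      have h2 : ((e : ℝ) + 1) = (p : ℝ) ^ Real.logb p (e + 1) := by
        rw [Real.rpow_logb hp0R (by linarith) (by positivity)]
      rw [h2, ← Real.rpow_natCast (p : ℝ) m]
      exact Real.rpow_le_rpow_left_iff hp1R |>.mpr h1
    -- main induction
    have key : ∀ k : ℕ, ‖u ^ (p ^ k) - 1‖ ≤ (p : ℝ) ^ (-((p : ℝ) ^ k / (e : ℝ))) ∨
        ‖u ^ (p ^ k) - 1‖ < r := by
      intro k
      induction k with
      | zero =>
        left
        simpa [neg_div] using hu1
      | succ k ih =>
        have hpow : u ^ (p ^ (k + 1)) = (u ^ (p ^ k)) ^ p := by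
          rw [← pow_mul, pow_succ]
        rcases ih with ih | ih
        · by_cases hc : (p : ℝ) ^ k / (e : ℝ) ≤ 1 / ((p : ℝ) - 1)
          · left
            rw [hpow]
            have heq : (p : ℝ) * ((p : ℝ) ^ k / (e : ℝ)) = (p : ℝ) ^ (k + 1) / (e : ℝ) := by
              rw [pow_succ]; ring
            rw [← heq]
            exact stepA (u ^ (p ^ k)) ((p : ℝ) ^ k / (e : ℝ)) (by positivity) hc ih
          · right
            rw [hpow]
            apply stepB
            refine ih.trans_lt ?_
            rw [hr]
            apply Real.rpow_lt_rpow_left_iff hp1R |>.mpr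
            push_neg at hc
            rw [neg_div]
            rw [neg_lt_neg_iff]
            exact hc
        · right
          rw [hpow]
          exact stepB _ ih
    rcases key m with h | h
    · refine h.trans_lt ?_
      rw [hr]
      apply Real.rpow_lt_rpow_left_iff hp1R |>.mpr
      rw [neg_div, neg_lt_neg_iff, div_lt_div_iff₀ hpm1 he0]
      have h3 : (2 : ℝ) ≤ (p : ℝ) := by exact_mod_cast hp2
      have h2 : (p : ℝ) ^ m * 1 ≤ (p : ℝ) ^ m * ((p : ℝ) - 1) :=
        mul_le_mul_of_nonneg_left (by linarith) (by positivity)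
      linarith
    · exact h
end

section
/- The limiting density of residues attained by the Fibonacci sequence modulo powers of 11 is 145/264; that is, lim_{α→∞} |{F(n) mod 11^α : n ≥ 0}| / 11^α = 145/264. -/
instance : Fact (Nat.Prime 11) := ⟨by norm_num⟩


/-- inverse mod 11 -/
lemma inv_mod11 (x : ℤ) (hx : ¬ (11:ℤ) ∣ x) : ∃ i : ℤ, (11:ℤ) ∣ x * i - 1 := by
  have hx' : (x : ZMod 11) ≠ 0 := by
    rwa [Ne, ZMod.intCast_zmod_eq_zero_iff_dvd]
  refine ⟨((x : ZMod 11)⁻¹).val, ?_⟩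
  have h : ((x * ((x : ZMod 11)⁻¹).val - 1 : ℤ) : ZMod 11) = 0 := by
    push_cast
    rw [ZMod.natCast_val, ZMod.cast_id', id_eq, mul_inv_cancel₀ hx', sub_self]
  exact_mod_cast (ZMod.intCast_zmod_eq_zero_iff_dvd _ 11).mp h

/-- quadratic Hensel lifting mod powers of 11 -/
lemma hensel_quad (b c s0 : ℤ) (h0 : (11:ℤ) ∣ s0^2 + b*s0 + c) (h1 : ¬ (11:ℤ) ∣ 2*s0 + b) :
    ∀ α : ℕ, 1 ≤ α → ∃ s : ℤ, (11:ℤ)^α ∣ s^2 + b*s + c ∧ (11:ℤ) ∣ s - s0 := by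
  intro α hα
  induction α, hα using Nat.le_induction with
  | base => exact ⟨s0, by simpa using h0, by simp⟩
  | succ n hn ih =>
    obtain ⟨s, hs, hss0⟩ := ih
    have hder : ¬ (11:ℤ) ∣ 2*s + b := by
      intro h; apply h1
      have h2 : (11:ℤ) ∣ 2*(s - s0) := Dvd.dvd.mul_left hss0 2
      omega
    obtain ⟨i, hi⟩ := inv_mod11 _ hder
    obtain ⟨d, hd⟩ := hs
    refine ⟨s - 11^n * (d * i), ?_, ?_⟩
    · have key : (s - 11^n * (d * i))^2 + b*(s - 11^n * (d * i)) + c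
          = 11^n * (d * (1 - (2*s+b)*i)) + (11^n)^2 * (d*i)^2 := by
        linear_combination hd
      rw [key]
      apply dvd_add
      · rw [pow_succ]
        exact mul_dvd_mul_left _ (Dvd.dvd.mul_left (by omega : (11:ℤ) ∣ 1 - (2*s+b)*i) d)
      · rw [← pow_mul]
        exact Dvd.dvd.mul_right (pow_dvd_pow 11 (by omega)) _
    · have h3 : (11:ℤ) ∣ 11^n * (d * i) := Dvd.dvd.mul_right (dvd_pow_self 11 (by omega)) _
      omega

/-- order lifting step -/
lemma order_step (β : ℕ) (hβ : 1 ≤ β) (t : ℤ) (h1 : (11:ℤ)^β ∣ t) (h2 : ¬ (11:ℤ)^(β+1) ∣ t) :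
    (11:ℤ)^(β+1) ∣ ((1+t)^11 - 1) ∧ ¬ (11:ℤ)^(β+2) ∣ ((1+t)^11 - 1) := by
  set Z : ℤ := 55 + 165*t + 330*t^2 + 462*t^3 + 462*t^4 + 330*t^5 + 165*t^6 + 55*t^7 + 11*t^8 + t^9 with hZdef
  have hZ : (11:ℤ) ∣ Z := by
    have h11t : (11:ℤ) ∣ t := dvd_trans (dvd_pow_self 11 (by omega)) h1
    obtain ⟨u, hu⟩ := h11t
    refine ⟨5 + 15*t + 30*t^2 + 42*t^3 + 42*t^4 + 30*t^5 + 15*t^6 + 5*t^7 + t^8 + u*t^8, ?_⟩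
    rw [hZdef, hu]; ring
  have key : (1+t)^11 - 1 = 11*t + t^2 * Z := by rw [hZdef]; ring
  have h1' : (11:ℤ)^(2*β) ∣ t^2 := by
    rw [two_mul, pow_add, pow_two]; exact mul_dvd_mul h1 h1
  have h2' : (11:ℤ)^(2*β+1) ∣ t^2 * Z := by
    rw [pow_succ]; exact mul_dvd_mul h1' hZ
  have hsq : (11:ℤ)^(β+2) ∣ t^2 * Z := dvd_trans (pow_dvd_pow 11 (by omega)) h2'
  constructor
  · rw [key]
    refine dvd_add ?_ (dvd_trans (pow_dvd_pow 11 (by omega)) hsq)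
    have : (11:ℤ)^β * 11 ∣ t * 11 := mul_dvd_mul_right h1 11
    rw [pow_succ]
    calc (11:ℤ)^β * 11 ∣ t * 11 := this
    _ = 11 * t := by ring
  · intro hcon
    rw [key] at hcon
    have h4 : (11:ℤ)^(β+2) ∣ 11*t := by
      have := dvd_sub hcon hsq
      simpa using this
    have h5 : (11:ℤ)^(β+1) ∣ t := by
      have he : (11:ℤ)^(β+2) = 11 * 11^(β+1) := by rw [pow_succ]; ring
      rw [he] at h4
      exact (mul_dvd_mul_iff_left (by norm_num : (11:ℤ) ≠ 0)).mp h4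
    exact h2 h5





/-- f ≡ 85 mod 121 from the quadratic equation -/
lemma f_mod121 (f : ℤ) (h8 : (11:ℤ) ∣ f - 8) (hq : (121:ℤ) ∣ f^2 - f - 1) :
    (121:ℤ) ∣ f - 85 := by
  have hp : Prime (11:ℤ) := by norm_num
  have hfac : (121:ℤ) ∣ (f - 85) * (f + 84) := by
    have : (f - 85) * (f + 84) = (f^2 - f - 1) - 7139 := by ring
    rw [this]
    exact dvd_sub hq (by norm_num)
  have hnd : ¬ (11:ℤ) ∣ f + 84 := by
    intro h; omega
  have h1 : (11:ℤ) ∣ (f - 85) * (f + 84) := dvd_trans (by norm_num) hfac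
  have h2 : (11:ℤ) ∣ f - 85 := (hp.dvd_mul.mp h1).resolve_right hnd
  obtain ⟨c, hc⟩ := h2
  have h3 : (11*11:ℤ) ∣ 11 * (c * (f + 84)) := by
    have : 11 * (c * (f + 84)) = (f - 85) * (f + 84) := by rw [hc]; ring
    rw [this]; exact_mod_cast hfac
  have h4 : (11:ℤ) ∣ c * (f + 84) := (mul_dvd_mul_iff_left (by norm_num : (11:ℤ) ≠ 0)).mp h3
  have h5 : (11:ℤ) ∣ c := (hp.dvd_mul.mp h4).resolve_right hnd
  obtain ⟨e, he⟩ := h5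
  exact ⟨e, by rw [hc, he]; ring⟩

/-- exact 11-adic valuation of f^(10*11^j) - 1 -/
lemma val_exact (f : ℤ) (h8 : (11:ℤ) ∣ f - 8) (h85 : (121:ℤ) ∣ f - 85) :
    ∀ j : ℕ, (11:ℤ)^(j+1) ∣ f^(10*11^j) - 1 ∧ ¬ (11:ℤ)^(j+2) ∣ f^(10*11^j) - 1 := by
  have hbase1 : (11:ℤ) ∣ f^10 - 1 := by
    have h : f ≡ 8 [ZMOD 11] := Int.ModEq.symm (Int.modEq_iff_dvd.mpr (by omega))
    have h3 : f^10 ≡ 1 [ZMOD 11] := (h.pow 10).trans (by decide)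
    have := h3.dvd
    omega
  have hbase2 : ¬ (121:ℤ) ∣ f^10 - 1 := by
    have h : f ≡ 85 [ZMOD 121] := Int.ModEq.symm (Int.modEq_iff_dvd.mpr (by omega))
    have h3 : f^10 ≡ 85^10 [ZMOD 121] := h.pow 10
    have hd := h3.dvd
    have h85e : (85:ℤ)^10 = 121 * 162706119289853434 + 111 := by norm_num
    intro hcon
    omega
  intro j
  induction j with
  | zero => simpa using ⟨hbase1, hbase2⟩
  | succ n ih =>
    obtain ⟨ih1, ih2⟩ := ih
    have e0 : n + 1 = 1 + n := by omega
    rw [e0] at ih1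
    have hstep := order_step (1+n) (by omega) (f^(10*11^n) - 1) ih1 (by
      have e1 : 1 + n + 1 = n + 2 := by omega
      rw [e1]; exact ih2)
    have hrw : (1 + (f^(10*11^n) - 1))^11 - 1 = f^(10*11^(n+1)) - 1 := by
      rw [add_sub_cancel]
      rw [← pow_mul]
      ring_nf
    rw [hrw] at hstep
    have e2 : 1 + n + 1 = n + 1 + 1 := by omega
    have e3 : 1 + n + 2 = n + 1 + 2 := by omega
    rw [e2, e3] at hstep
    exact hstep





lemma red_ne_one (α : ℕ) (hα : 1 ≤ α) (f : ℤ) (h8 : (11:ℤ) ∣ f - 8) (N : ℕ)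
    (hne : (8:ZMod 11)^(N % 10) ≠ 1) : (f : ZMod (11^α))^N ≠ 1 := by
  intro h
  have hdvd : (11:ℕ) ∣ 11^α := dvd_pow_self 11 (by omega)
  let π := ZMod.castHom hdvd (ZMod 11)
  have h2 := congrArg π h
  rw [map_pow, map_intCast, map_one] at h2
  have hf8 : ((f:ℤ) : ZMod 11) = 8 := by
    have h3 : ((f - 8 : ℤ) : ZMod 11) = 0 :=
      (ZMod.intCast_zmod_eq_zero_iff_dvd _ 11).mpr (by exact_mod_cast h8)
    push_cast at h3
    linear_combination h3
  rw [hf8] at h2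
  apply hne
  calc (8:ZMod 11)^(N % 10) = (8:ZMod 11)^(N % 10) * ((8:ZMod 11)^10)^(N / 10) := by
        rw [show ((8:ZMod 11)^10) = 1 from by decide, one_pow, mul_one]
  _ = (8:ZMod 11)^(N % 10 + 10 * (N/10)) := by rw [pow_add, pow_mul]
  _ = (8:ZMod 11)^N := by rw [Nat.mod_add_div]
  _ = 1 := h2

lemma exists_pow_eq (α : ℕ) (hα : 1 ≤ α) (f : ℤ)
    (hq : (11:ℤ)^α ∣ f^2 - f - 1) (h8 : (11:ℤ) ∣ f - 8)
    (x : ZMod (11^α)) (hx : IsUnit x) : ∃ n : ℕ, (f : ZMod (11^α))^n = x := by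
  haveI : NeZero (11^α) := ⟨pow_ne_zero _ (by norm_num)⟩
  set φ : ZMod (11^α) := (f : ZMod (11^α)) with hφdef
  have hq0 : φ^2 - φ - 1 = 0 := by
    have h3 : ((f^2 - f - 1 : ℤ) : ZMod (11^α)) = 0 :=
      (ZMod.intCast_zmod_eq_zero_iff_dvd _ (11^α)).mpr (by push_cast; exact_mod_cast hq)
    push_cast at h3
    exact h3
  have hφu : φ * (φ - 1) = 1 := by linear_combination hq0
  set u : (ZMod (11^α))ˣ := ⟨φ, φ - 1, hφu, by linear_combination hφu⟩ with hudef
  have hmod10 : 11^(α-1) % 10 = 1 := by rw [Nat.pow_mod]; norm_num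
  have hcard : Fintype.card (ZMod (11^α))ˣ = 10 * 11^(α-1) := by
    rw [ZMod.card_units_eq_totient, Nat.totient_prime_pow (by norm_num : Nat.Prime 11) (by omega)]
    omega
  have hdord : orderOf u ∣ 10 * 11^(α-1) := hcard ▸ orderOf_dvd_card
  have hupow : ∀ N : ℕ, u ^ N = 1 → φ^N = 1 := by
    intro N hN
    have := congrArg Units.val hN
    simpa using this
  have hord : orderOf u = 10 * 11^(α-1) := by
    by_contra hne
    obtain ⟨k, hk⟩ := hdord
    have hNpos : 0 < 10 * 11^(α-1) := by positivity
    have hk0 : k ≠ 0 := by rintro rfl; rw [mul_zero] at hk; omega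
    have hdpos : 0 < orderOf u := orderOf_pos u
    have hk1 : k ≠ 1 := by rintro rfl; rw [mul_one] at hk; exact hne hk.symm
    obtain ⟨q, hqprime, hqk⟩ : ∃ q, q.Prime ∧ q ∣ k := ⟨k.minFac, Nat.minFac_prime hk1, Nat.minFac_dvd k⟩
    obtain ⟨k', hk'⟩ := hqk
    have hpow : u ^ (orderOf u * k') = 1 := by rw [pow_mul, pow_orderOf_eq_one, one_pow]
    have hN : 10 * 11^(α-1) = (orderOf u * k') * q := by rw [hk, hk']; ring
    have hqN : q ∣ 10 * 11^(α-1) := ⟨orderOf u * k', by rw [hN]; ring⟩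
    have hphipow : φ ^ (orderOf u * k') = 1 := hupow _ hpow
    have hq25 : q = 2 ∨ q = 5 ∨ q = 11 := by
      rcases (Nat.Prime.dvd_mul hqprime).mp hqN with h | h
      · have hb1 : 2 ≤ q := hqprime.two_le
        have hb2 : q ≤ 10 := Nat.le_of_dvd (by norm_num) h
        interval_cases q
        all_goals first
          | omega
          | (exact Or.inl rfl)
          | (exact Or.inr (Or.inl rfl))
          | (norm_num at hqprime)
      · have := hqprime.dvd_of_dvd_pow h
        right; right
        exact (Nat.prime_dvd_prime_iff_eq hqprime (by norm_num)).mp this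
    rcases hq25 with rfl | rfl | rfl
    · have he : orderOf u * k' = 5 * 11^(α-1) := by omega
      rw [he] at hphipow
      exact red_ne_one α hα f h8 _ (by
        rw [show (5 * 11^(α-1)) % 10 = 5 by omega]; decide) hphipow
    · have he : orderOf u * k' = 2 * 11^(α-1) := by omega
      rw [he] at hphipow
      exact red_ne_one α hα f h8 _ (by
        rw [show (2 * 11^(α-1)) % 10 = 2 by omega]; decide) hphipow
    · -- q = 11
      rcases Nat.lt_or_ge α 2 with h2 | h2
      · interval_cases α
        · simp at hN; omega
      · have hpowsplit : 11^(α-1) = 11^(α-2) * 11 := by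
          rw [← pow_succ]; congr 1; omega
        have he : orderOf u * k' = 10 * 11^(α-2) := by
          rw [hpowsplit] at hN; omega
        rw [he] at hphipow
        have h85 : (121:ℤ) ∣ f - 85 := by
          apply f_mod121 f h8
          refine dvd_trans ?_ hq
          have : ((11:ℤ))^2 ∣ 11^α := pow_dvd_pow 11 h2
          norm_num at this ⊢
          exact_mod_cast this
        have hval := (val_exact f h8 h85 (α-2)).2
        rw [show α - 2 + 2 = α by omega] at hval
        apply hval
        have h3 : ((f^(10 * 11^(α-2)) - 1 : ℤ) : ZMod (11^α)) = 0 := by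
          push_cast
          rw [hphipow]
          ring
        have := (ZMod.intCast_zmod_eq_zero_iff_dvd _ (11^α)).mp h3
        push_cast at this
        exact_mod_cast this
  have htop : Subgroup.zpowers u = ⊤ := by
    apply Subgroup.eq_top_of_card_eq
    rw [Nat.card_zpowers, hord, Nat.card_eq_fintype_card, hcard]
  have hmem : hx.unit ∈ Subgroup.zpowers u := htop ▸ Subgroup.mem_top _
  obtain ⟨n, hn⟩ := (mem_powers_iff_mem_zpowers).mpr hmem
  refine ⟨n, ?_⟩
  have := congrArg Units.val hn
  simpa [hx.unit_spec] using this




section Setup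
variable (α : ℕ) (f : ℤ)

lemma phi_sq (hq : (11:ℤ)^α ∣ f^2 - f - 1) :
    (f : ZMod (11^α))^2 = (f:ZMod (11^α)) + 1 := by
  have h3 : ((f^2 - f - 1 : ℤ) : ZMod (11^α)) = 0 :=
    (ZMod.intCast_zmod_eq_zero_iff_dvd _ (11^α)).mpr (by push_cast; exact_mod_cast hq)
  push_cast at h3
  linear_combination h3

lemma fib_formula (hq : (11:ℤ)^α ∣ f^2 - f - 1) :
    ∀ n : ℕ, (2*(f:ZMod (11^α)) - 1) * (Nat.fib n : ZMod (11^α))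
      = (f:ZMod (11^α))^n - (1 - (f:ZMod (11^α)))^n := by
  have hφ2 := phi_sq α f hq
  have hψ2 : (1 - (f:ZMod (11^α)))^2 = (1 - (f:ZMod (11^α))) + 1 := by linear_combination hφ2
  intro n
  induction n using Nat.twoStepInduction with
  | zero => simp
  | one => simp [Nat.fib_one]; ring
  | more n ih1 ih2 =>
    rw [Nat.fib_add_two]
    push_cast
    linear_combination ih1 + ih2 - (f:ZMod (11^α))^n * hφ2 + (1 - (f:ZMod (11^α)))^n * hψ2

lemma lucas_sq (hq : (11:ℤ)^α ∣ f^2 - f - 1) (n : ℕ) :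
    ((f:ZMod (11^α))^n + (1-(f:ZMod (11^α)))^n)^2
      = 5*(Nat.fib n : ZMod (11^α))^2 + 4*(-1:ZMod (11^α))^n := by
  have hφ2 := phi_sq α f hq
  have hfib := fib_formula α f hq n
  have hprod : (f:ZMod (11^α))^n * (1-(f:ZMod (11^α)))^n = (-1:ZMod (11^α))^n := by
    rw [← mul_pow]
    congr 1
    linear_combination -hφ2
  have hD : (2*(f:ZMod (11^α))-1)^2 = 5 := by linear_combination 4*hφ2
  linear_combination (-((2*(f:ZMod (11^α))-1) * (Nat.fib n : ZMod (11^α))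
      + (f:ZMod (11^α))^n - (1-(f:ZMod (11^α)))^n)) * hfib
    + (Nat.fib n : ZMod (11^α))^2 * hD + 4*hprod

end Setup


lemma fib_add_ten (n : ℕ) : ((Nat.fib (n+10) : ZMod 11)) = (Nat.fib n : ZMod 11) := by
  have h := Nat.fib_add n 9
  rw [show n + 9 + 1 = n + 10 from by omega] at h
  rw [h, show Nat.fib 9 = 34 from rfl, show Nat.fib (9+1) = 55 from rfl]
  push_cast
  rw [show ((34:ZMod 11)) = 1 from by decide, show ((55:ZMod 11)) = 0 from by decide]
  ring

lemma fib_mod_ten : ∀ n : ℕ, (Nat.fib n : ZMod 11) = (Nat.fib (n % 10) : ZMod 11) := by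
  intro n
  induction n using Nat.strong_induction_on with
  | _ n ih =>
    by_cases h : n < 10
    · rw [Nat.mod_eq_of_lt h]
    · have e : n = (n - 10) + 10 := by omega
      rw [e, fib_add_ten, ih (n-10) (by omega)]
      congr 2
      omega

lemma odd_fib_class (n : ℕ) (hodd : n % 2 = 1) :
    (Nat.fib n : ZMod 11) = 1 ∨ (Nat.fib n : ZMod 11) = 2 ∨ (Nat.fib n : ZMod 11) = 5 := by
  rw [fib_mod_ten]
  have h : n % 10 = 1 ∨ n % 10 = 3 ∨ n % 10 = 5 ∨ n % 10 = 7 ∨ n % 10 = 9 := by omega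
  rcases h with h|h|h|h|h <;> rw [h] <;> norm_num <;> decide

lemma two_inv_aux (α : ℕ) (hα : 1 ≤ α) :
    (2:ZMod (11^α)) * (((11^α+1)/2 : ℕ) : ZMod (11^α)) = 1 := by
  have hdvd : 2 ∣ 11^α + 1 := by
    have h : 11^α % 2 = 1 := by rw [Nat.pow_mod]; norm_num
    omega
  have h1 : (2:ZMod (11^α)) * (((11^α+1)/2 : ℕ) : ZMod (11^α))
      = ((2 * ((11^α+1)/2) : ℕ) : ZMod (11^α)) := by push_cast; ring
  rw [h1, Nat.mul_div_cancel' hdvd, Nat.cast_add, ZMod.natCast_self, Nat.cast_one, zero_add]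

lemma five_inv_aux (α : ℕ) :
    (5:ZMod (11^α)) * (((4*11^α+1)/5 : ℕ) : ZMod (11^α)) = 1 := by
  have hdvd : 5 ∣ 4*11^α + 1 := by
    have h : 11^α % 5 = 1 := by rw [Nat.pow_mod]; norm_num
    omega
  have h1 : (5:ZMod (11^α)) * (((4*11^α+1)/5 : ℕ) : ZMod (11^α))
      = ((5 * ((4*11^α+1)/5) : ℕ) : ZMod (11^α)) := by push_cast; ring
  rw [h1, Nat.mul_div_cancel' hdvd, Nat.cast_add, Nat.cast_mul, ZMod.natCast_self, Nat.cast_one,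
    mul_zero, zero_add]










/-- the main characterization -/
theorem char_attained (α : ℕ) (hα : 1 ≤ α) (f : ℤ) (hq : (11:ℤ)^α ∣ f^2 - f - 1)
    (h8 : (11:ℤ) ∣ f - 8) (m : ZMod (11^α)) :
    (∃ n : ℕ, (Nat.fib n : ZMod (11^α)) = m) ↔
      ((∃ s : ZMod (11^α), s^2 = 5*m^2 + 4) ∨
       ((∃ s : ZMod (11^α), s^2 = 5*m^2 - 4) ∧
        ((m.val : ZMod 11) = 1 ∨ (m.val : ZMod 11) = 2 ∨ (m.val : ZMod 11) = 5))) := by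
  have hdvd : (11:ℕ) ∣ 11^α := dvd_pow_self 11 (by omega)
  set π : ZMod (11^α) →+* ZMod 11 := ZMod.castHom hdvd (ZMod 11) with hπdef
  set φ : ZMod (11^α) := (f : ZMod (11^α)) with hφdef
  set D : ZMod (11^α) := 2*φ - 1 with hDdef
  set i2 : ZMod (11^α) := (((11^α+1)/2 : ℕ) : ZMod (11^α)) with hi2def
  set i5 : ZMod (11^α) := (((4*11^α+1)/5 : ℕ) : ZMod (11^α)) with hi5def
  have hφ2 : φ^2 = φ + 1 := phi_sq α f hq
  have hD2 : D^2 = 5 := by rw [hDdef]; linear_combination 4*hφ2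
  have h2i : (2:ZMod (11^α)) * i2 = 1 := two_inv_aux α hα
  have h5i : (5:ZMod (11^α)) * i5 = 1 := five_inv_aux α
  have hDunit : IsUnit D := IsUnit.of_mul_eq_one (D*i5) (by linear_combination i5*hD2 + h5i)
  have hπφ : π φ = 8 := by
    rw [hφdef, map_intCast]
    have h3 : ((f - 8 : ℤ) : ZMod 11) = 0 :=
      (ZMod.intCast_zmod_eq_zero_iff_dvd _ 11).mpr (by exact_mod_cast h8)
    push_cast at h3
    linear_combination h3
  have hπD : π D = 4 := by
    rw [hDdef, map_sub, map_mul, map_one, map_ofNat, hπφ]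
    decide
  have hbr : ∀ z : ZMod (11^α), ((z.val : ℕ) : ZMod 11) = π z := by
    intro z
    rw [ZMod.natCast_val, ZMod.castHom_apply]
  have hfibf : ∀ n : ℕ, D * (Nat.fib n : ZMod (11^α)) = φ^n - (1-φ)^n := by
    intro n
    rw [hDdef, hφdef]
    exact fib_formula α f hq n
  -- square parity facts
  have hsq8even : ∀ n : ℕ, n % 2 = 0 → IsSquare ((8:ZMod 11)^n) := by
    intro n hn
    obtain ⟨k, hk⟩ : ∃ k, n = 2*k := ⟨n/2, by omega⟩
    exact ⟨8^k, by rw [hk, two_mul, pow_add]⟩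
  have hsq8odd : ∀ n : ℕ, n % 2 = 1 → ¬ IsSquare ((8:ZMod 11)^n) := by
    intro n hn hcon
    obtain ⟨k, hk⟩ : ∃ k, n = 2*k+1 := ⟨n/2, by omega⟩
    have h8k : ((8:ZMod 11)^k) ≠ 0 := pow_ne_zero _ (by decide)
    have F2 : ∀ a : ZMod 11, a ≠ 0 → ¬ IsSquare (8 * (a*a)) := by decide
    apply F2 _ h8k
    have he : (8:ZMod 11) * (8^k * 8^k) = 8^(2*k+1) := by
      rw [pow_succ, two_mul, pow_add]; ring
    rw [he, ← hk]
    exact hcon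
  constructor
  · rintro ⟨n, hm⟩
    have hL := lucas_sq α f hq n
    rw [← hφdef] at hL
    have hclassbr : ((m.val : ℕ) : ZMod 11) = (Nat.fib n : ZMod 11) := by
      rw [hbr, ← hm, map_natCast]
    rcases Nat.even_or_odd n with he | ho
    · left
      refine ⟨φ^n + (1-φ)^n, ?_⟩
      rw [hL, he.neg_one_pow, hm]; ring
    · right
      constructor
      · refine ⟨φ^n + (1-φ)^n, ?_⟩
        rw [hL, ho.neg_one_pow, hm]; ring
      · rw [hclassbr]
        exact odd_fib_class n (Nat.odd_iff.mp ho)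
  · -- backward
    intro h
    have main : ∀ s : ZMod (11^α), s^2 = 5*m^2+4 → IsSquare (π (i2*(D*m+s))) →
        ∃ n : ℕ, (Nat.fib n : ZMod (11^α)) = m := by
      intro s hs hsq
      have hX : (D*m+s)^2 - 2*(D*m)*(D*m+s) - 4 = 0 := by
        linear_combination hs - m^2*hD2
      have hroot : (i2*(D*m+s))^2 - D*m*(i2*(D*m+s)) - 1 = 0 := by
        linear_combination i2^2*hX + (i2*(D*m)*(D*m+s) + 2*i2 + 1)*h2i
      have hxunit : IsUnit (i2*(D*m+s)) :=
        IsUnit.of_mul_eq_one ((i2*(D*m+s)) - D*m) (by linear_combination hroot)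
      obtain ⟨n, hn⟩ := exists_pow_eq α hα f hq h8 _ hxunit
      rw [← hφdef] at hn
      have hπx : π (i2*(D*m+s)) = (8:ZMod 11)^n := by rw [← hn, map_pow, hπφ]
      have hev : n % 2 = 0 := by
        by_contra hodd
        exact hsq8odd n (by omega) (hπx ▸ hsq)
      have hψn : φ^n * (1-φ)^n = 1 := by
        rw [← mul_pow, show φ*(1-φ) = -1 from by linear_combination -hφ2,
          (Nat.even_iff.mpr hev).neg_one_pow]
      rw [← hn] at hroot
      have hfib := hfibf n
      have key : φ^n * (D * (Nat.fib n : ZMod (11^α))) = φ^n * (D * m) := by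
        linear_combination φ^n * hfib - hψn + hroot
      have hφnu : IsUnit (φ^n) := by rw [hn]; exact hxunit
      exact ⟨n, hDunit.mul_left_cancel (hφnu.mul_left_cancel key)⟩
    have main2 : ∀ s : ZMod (11^α), s^2 = 5*m^2-4 →
        ((m.val : ZMod 11) = 1 ∨ (m.val : ZMod 11) = 2 ∨ (m.val : ZMod 11) = 5) →
        ∃ n : ℕ, (Nat.fib n : ZMod (11^α)) = m := by
      intro s hs hclass
      have hX : (D*m+s)^2 - 2*(D*m)*(D*m+s) + 4 = 0 := by
        linear_combination hs - m^2*hD2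
      have hroot : (i2*(D*m+s))^2 - D*m*(i2*(D*m+s)) + 1 = 0 := by
        linear_combination i2^2*hX + (i2*(D*m)*(D*m+s) - (2*i2 + 1))*h2i
      have hxunit : IsUnit (i2*(D*m+s)) :=
        IsUnit.of_mul_eq_one (D*m - (i2*(D*m+s))) (by linear_combination -hroot)
      obtain ⟨n, hn⟩ := exists_pow_eq α hα f hq h8 _ hxunit
      rw [← hφdef] at hn
      have hπx : π (i2*(D*m+s)) = (8:ZMod 11)^n := by rw [← hn, map_pow, hπφ]
      have h7 := congrArg π hroot
      simp only [map_add, map_sub, map_mul, map_pow, map_one, map_zero] at h7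
      rw [hπD] at h7
      have hπx' := hπx
      simp only [map_mul, map_add] at hπx'
      have F1 : ∀ mb xb : ZMod 11, (mb = 1 ∨ mb = 2 ∨ mb = 5) →
          xb^2 - 4*mb*xb + 1 = 0 → ¬ IsSquare xb := by decide
      have hnotsq := F1 (π m) (π i2 * (4 * π m + π s)) (by rw [← hbr m]; exact hclass)
        (by linear_combination h7)
      have hodd : n % 2 = 1 := by
        by_contra hev
        rw [hπD] at hπx'
        exact hnotsq (hπx' ▸ hsq8even n (by omega))
      have hψn : φ^n * (1-φ)^n = -1 := by
        rw [← mul_pow, show φ*(1-φ) = -1 from by linear_combination -hφ2,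
          (Nat.odd_iff.mpr hodd).neg_one_pow]
      rw [← hn] at hroot
      have hfib := hfibf n
      have key : φ^n * (D * (Nat.fib n : ZMod (11^α))) = φ^n * (D * m) := by
        linear_combination φ^n * hfib - hψn + hroot
      have hφnu : IsUnit (φ^n) := by rw [hn]; exact hxunit
      exact ⟨n, hDunit.mul_left_cancel (hφnu.mul_left_cancel key)⟩
    rcases h with ⟨s, hs⟩ | ⟨⟨s, hs⟩, hclass⟩
    · have hprodsign : (π (i2*(D*m+s))) * (π (i2*(D*m+(-s)))) = -1 := by
        rw [← map_mul]
        have hpr : (i2*(D*m+s)) * (i2*(D*m+(-s))) = -1 := by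
          linear_combination i2^2*m^2*hD2 - i2^2*hs - (2*i2+1)*h2i
        rw [hpr, map_neg, map_one]
      have F0 : ∀ a b : ZMod 11, a * b = -1 → IsSquare a ∨ IsSquare b := by decide
      rcases F0 _ _ hprodsign with hsq | hsq
      · exact main s hs hsq
      · exact main (-s) (by rw [neg_pow]; simpa using hs) hsq
    · exact main2 s hs hclass



/-- counting one residue class -/
lemma count_class (c M : ℕ) (hc : c < 11) :
    ((Finset.range (11*M)).filter (fun v => v % 11 = c)).card = M := by
  have he : (Finset.range (11*M)).filter (fun v => v % 11 = c)
      = (Finset.range M).image (fun t => 11*t + c) := by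
    ext v
    simp only [Finset.mem_filter, Finset.mem_range, Finset.mem_image]
    constructor
    · rintro ⟨h1, h2⟩
      exact ⟨v / 11, by omega, by omega⟩
    · rintro ⟨t, ht, rfl⟩
      omega
  rw [he, Finset.card_image_of_injective _ (fun a b hab => by omega), Finset.card_range]

lemma count_classes (C : Finset ℕ) (hC : ∀ c ∈ C, c < 11) (M : ℕ) :
    ((Finset.range (11*M)).filter (fun v => v % 11 ∈ C)).card = C.card * M := by
  induction C using Finset.induction_on with
  | empty => simp
  | @insert a s ha ih =>
    have hsplit : (Finset.range (11*M)).filter (fun v => v % 11 ∈ insert a s)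
        = ((Finset.range (11*M)).filter (fun v => v % 11 = a))
          ∪ ((Finset.range (11*M)).filter (fun v => v % 11 ∈ s)) := by
      rw [← Finset.filter_or]
      apply Finset.filter_congr
      intro v _
      simp [Finset.mem_insert]
    rw [hsplit, Finset.card_union_of_disjoint, count_class a M (hC a (Finset.mem_insert_self a s)),
      ih (fun c hc => hC c (Finset.mem_insert_of_mem hc)), Finset.card_insert_of_notMem ha]
    · ring
    · rw [Finset.disjoint_filter]
      intro v _ h1 h2
      rw [h1] at h2
      exact ha h2

/-- geometric sum -/
lemma geom24 : ∀ γ : ℕ, 120 * (∑ j ∈ Finset.Icc 1 (γ/2), 11^(γ-2*j)) = 11^γ - 11^(γ % 2) := by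
  intro γ
  induction γ using Nat.twoStepInduction with
  | zero => simp
  | one => simp
  | more γ ih _ =>
    have hsplit : Finset.Icc 1 ((γ+2)/2) = insert 1 (Finset.Icc 2 (γ/2+1)) := by
      ext j
      simp only [Finset.mem_Icc, Finset.mem_insert]
      omega
    have hmap : Finset.Icc 2 (γ/2+1) = (Finset.Icc 1 (γ/2)).map (addRightEmbedding 1) := by
      rw [Finset.map_add_right_Icc]
    have h1 : (∑ j ∈ Finset.Icc 1 ((γ+2)/2), 11^(γ+2-2*j))
        = 11^γ + ∑ j ∈ Finset.Icc 1 (γ/2), 11^(γ-2*j) := by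
      rw [hsplit, Finset.sum_insert (by simp), hmap, Finset.sum_map]
      simp only [addRightEmbedding_apply]
      have hs2 : ∀ x ∈ Finset.Icc 1 (γ/2), ((11:ℕ)^(γ+2-2*(x+1)) : ℕ) = 11^(γ-2*x) := by
        intro x hx
        simp only [Finset.mem_Icc] at hx
        congr 1
        omega
      rw [Finset.sum_congr rfl hs2, show γ+2-2*1 = γ from by omega]
    rw [h1]
    have h2 : (11:ℕ)^(γ+2) = 121 * 11^γ := by rw [pow_add]; ring
    have h3 : (γ+2) % 2 = γ % 2 := by omega
    have h4 : (11:ℕ)^(γ % 2) ≤ 11^γ := Nat.pow_le_pow_right (by norm_num) (by omega)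
    rw [h3]
    omega

/-- unit square lifting iff -/
lemma sq_unit_iff (α : ℕ) (hα : 1 ≤ α) (a : ℤ) (ha : ¬(11:ℤ)∣a) :
    (∃ s:ℤ, (11:ℤ)^α ∣ s^2 - a) ↔ (∃ s:ℤ, (11:ℤ) ∣ s^2 - a) := by
  constructor
  · rintro ⟨s, hs⟩
    exact ⟨s, dvd_trans (dvd_pow_self 11 (by omega)) hs⟩
  · rintro ⟨s, hs⟩
    have hp : Prime (11:ℤ) := by norm_num
    have hns : ¬ (11:ℤ) ∣ s := by
      intro h
      apply ha
      have h2 : (11:ℤ) ∣ s^2 := by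
        rw [pow_two]; exact dvd_mul_of_dvd_left h s
      omega
    have h2s : ¬ (11:ℤ) ∣ 2*s + 0 := by
      rw [add_zero]
      intro h
      rcases hp.dvd_mul.mp h with h2|h2
      · norm_num at h2
      · exact hns h2
    obtain ⟨s', hs', -⟩ := hensel_quad 0 (-a) s (by
      have : s^2 + 0*s + (-a) = s^2 - a := by ring
      rw [this]; exact hs) h2s α hα
    refine ⟨s', ?_⟩
    have : s'^2 - a = s'^2 + 0*s' + (-a) := by ring
    rw [this]; exact hs'


lemma sq_stratum_fwd : ∀ (k : ℕ), ∀ (α : ℕ) (s t : ℤ), k+1 ≤ α → ¬(11:ℤ)∣t →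
    (11:ℤ)^α ∣ s^2 - 11^k * t → k % 2 = 0 ∧ ∃ c:ℤ, (11:ℤ) ∣ c^2 - t := by
  have hp : Prime (11:ℤ) := by norm_num
  intro k
  induction k using Nat.twoStepInduction with
  | zero =>
    intro α s t hkα ht h
    refine ⟨rfl, s, ?_⟩
    have h2 : (11:ℤ) ∣ s^2 - 11^0*t := dvd_trans (dvd_pow_self 11 (by omega)) h
    simpa using h2
  | one =>
    intro α s t hkα ht h
    exfalso
    have h121 : (121:ℤ) ∣ s^2 - 11^1*t := by
      refine dvd_trans ?_ h
      have : ((11:ℤ))^2 ∣ 11^α := pow_dvd_pow 11 (by omega)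
      norm_num at this ⊢
      exact_mod_cast this
    have h11 : (11:ℤ) ∣ s^2 - 11^1*t := dvd_trans (by norm_num) h121
    have hs2 : (11:ℤ) ∣ s^2 := by
      have ht1 : (11:ℤ) ∣ 11^1*t := by norm_num
      have : s^2 = (s^2 - 11^1*t) + 11^1*t := by ring
      rw [this]; exact dvd_add h11 ht1
    have hs1 : (11:ℤ) ∣ s := hp.dvd_of_dvd_pow hs2
    obtain ⟨s', rfl⟩ := hs1
    have h11t : (121:ℤ) ∣ 11*t := by
      have he : 11*t = 121*s'^2 - ((11*s')^2 - 11^1*t) := by ring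
      rw [he]
      exact dvd_sub ⟨s'^2, rfl⟩ h121
    apply ht
    obtain ⟨c, hc⟩ := h11t
    exact ⟨c, by linarith⟩
  | more k ihk _ =>
    intro α s t hkα ht h
    have h11 : (11:ℤ) ∣ s^2 - 11^(k+2)*t := dvd_trans (dvd_pow_self 11 (by omega)) h
    have hs2 : (11:ℤ) ∣ s^2 := by
      have ht1 : (11:ℤ) ∣ 11^(k+2)*t := by
        exact Dvd.dvd.mul_right (dvd_pow_self 11 (by omega)) t
      have he : s^2 = (s^2 - 11^(k+2)*t) + 11^(k+2)*t := by ring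
      rw [he]; exact dvd_add h11 ht1
    obtain ⟨s', rfl⟩ := hp.dvd_of_dvd_pow hs2
    have hkey : (11*s')^2 - 11^(k+2)*t = 121*(s'^2 - 11^k*t) := by
      rw [pow_add]; ring
    rw [hkey] at h
    rw [show α = 2 + (α-2) from by omega, pow_add] at h
    have h' : (11:ℤ)^(α-2) ∣ s'^2 - 11^k*t := by
      have h121 : ((11:ℤ)^2) = 121 := by norm_num
      rw [h121] at h
      exact (mul_dvd_mul_iff_left (by norm_num : (121:ℤ) ≠ 0)).mp h
    obtain ⟨hk0, c, hc⟩ := ihk (α-2) s' t (by omega) ht h'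
    exact ⟨by omega, c, hc⟩

lemma sq_stratum_bwd (α k j : ℕ) (hj : k = 2*j) (hk : k+1 ≤ α) (t : ℤ) (ht : ¬(11:ℤ)∣t)
    (hQR : ∃ c:ℤ, (11:ℤ) ∣ c^2 - t) : ∃ s:ℤ, (11:ℤ)^α ∣ s^2 - 11^k*t := by
  obtain ⟨s0, hs0⟩ := (sq_unit_iff (α-k) (by omega) t ht).mpr hQR
  refine ⟨11^j * s0, ?_⟩
  have hkk : (11:ℤ)^k = 11^j * 11^j := by rw [hj, two_mul, pow_add]
  have he : (11^j*s0)^2 - 11^k*t = 11^k * (s0^2 - t) := by rw [hkk]; ring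
  rw [he, show α = k + (α-k) from by omega, pow_add]
  exact mul_dvd_mul_left _ hs0

lemma qr_iff_zmod (t : ℤ) : (∃ c:ℤ, (11:ℤ) ∣ c^2 - t) ↔ IsSquare ((t : ZMod 11)) := by
  constructor
  · rintro ⟨c, hc⟩
    have h0 : ((c^2 - t : ℤ) : ZMod 11) = 0 :=
      (ZMod.intCast_zmod_eq_zero_iff_dvd _ 11).mpr (by exact_mod_cast hc)
    push_cast at h0
    exact ⟨(c:ZMod 11), by linear_combination -h0⟩
  · rintro ⟨r, hr⟩
    refine ⟨(r.val : ℤ), ?_⟩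
    have h0 : (((r.val:ℤ)^2 - t : ℤ) : ZMod 11) = 0 := by
      push_cast
      rw [ZMod.natCast_val, ZMod.cast_id]
      rw [hr]; ring
    exact_mod_cast (ZMod.intCast_zmod_eq_zero_iff_dvd _ 11).mp h0

lemma zmod_sq_lift (α : ℕ) (hα : 1 ≤ α) (a : ZMod (11^α))
    (h0 : ((a.val:ℕ):ZMod 11) ≠ 0) (hs : IsSquare (((a.val:ℕ)):ZMod 11)) :
    ∃ s : ZMod (11^α), s^2 = a := by
  haveI : NeZero (11^α) := ⟨pow_ne_zero _ (by norm_num)⟩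
  have hnd : ¬ (11:ℤ) ∣ (a.val : ℤ) := by
    intro h
    apply h0
    have h2 := (ZMod.intCast_zmod_eq_zero_iff_dvd (a.val:ℤ) 11).mpr (by exact_mod_cast h)
    exact_mod_cast h2
  have hqr : ∃ c:ℤ, (11:ℤ) ∣ c^2 - (a.val:ℤ) := (qr_iff_zmod _).mpr (by push_cast; exact hs)
  obtain ⟨s, hs'⟩ := (sq_unit_iff α hα _ hnd).mpr hqr
  refine ⟨((s:ℤ) : ZMod (11^α)), ?_⟩
  have h2 : ((s^2 - (a.val:ℤ) : ℤ) : ZMod (11^α)) = 0 := by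
    rw [ZMod.intCast_zmod_eq_zero_iff_dvd]
    exact_mod_cast hs'
  push_cast at h2
  rw [ZMod.natCast_val, ZMod.cast_id] at h2
  linear_combination h2

lemma card_zmod_filter (N : ℕ) [NeZero N] (P : ZMod N → Prop) [DecidablePred P] :
    (Finset.univ.filter P).card = ((Finset.range N).filter (fun v => P ((v:ℕ) : ZMod N))).card := by
  apply Finset.card_nbij (i := fun m => m.val)
  · intro m hm
    simp only [Finset.mem_coe, Finset.mem_filter, Finset.mem_range, Finset.mem_univ, true_and] at *
    refine ⟨ZMod.val_lt m, ?_⟩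
    rw [ZMod.natCast_val, ZMod.cast_id]
    exact hm
  · intro a _ b _ hab
    exact ZMod.val_injective N hab
  · intro v hv
    simp only [Finset.coe_filter, Set.mem_setOf_eq, Finset.mem_range, Finset.mem_univ,
      true_and] at hv
    refine ⟨(v : ZMod N), ?_, ZMod.val_cast_of_lt hv.1⟩
    simp only [Finset.coe_filter, Set.mem_setOf_eq, Finset.mem_univ, true_and]
    exact hv.2




open Finset

lemma countW (α : ℕ) (hα : 1 ≤ α) :
    (Finset.univ.filter (fun w : ZMod (11^α) =>
        ((w.val:ℕ):ZMod 11) = 0 ∧ ∃ s : ZMod (11^α), s^2 = w*(w-4))).card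
      = 1 + ∑ j ∈ Finset.Icc 1 ((α-1)/2), 5 * 11^(α-1-2*j) := by
  classical
  haveI : NeZero (11^α) := ⟨pow_ne_zero _ (by norm_num)⟩
  have hdvd : (11:ℕ) ∣ 11^α := dvd_pow_self 11 (by omega)
  have hp : Prime (11:ℤ) := by norm_num
  have hclass_iff : ∀ v k : ℕ, k < 11 → (((v:ℕ):ZMod 11) = ((k:ℕ):ZMod 11) ↔ v % 11 = k) := by
    intro v k hk
    rw [ZMod.natCast_eq_natCast_iff]
    unfold Nat.ModEq
    omega
  have hcv : ∀ v : ℕ, (((v : ZMod (11^α)).val : ℕ) : ZMod 11) = ((v:ℕ) : ZMod 11) := by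
    intro v
    rw [ZMod.val_natCast, ZMod.natCast_eq_natCast_iff]
    exact (Nat.mod_modEq v (11^α)).of_dvd hdvd
  have hQ7 : ∀ tb : ZMod 11, tb ≠ 0 →
      (IsSquare (7*tb) ↔ (tb = 2 ∨ tb = 6 ∨ tb = 7 ∨ tb = 8 ∨ tb = 10)) := by decide
  have hTmem : ∀ t : ℕ, (t % 11 = 2 ∨ t % 11 = 6 ∨ t % 11 = 7 ∨ t % 11 = 8 ∨ t % 11 = 10) ↔
      (((t:ℕ):ZMod 11) = 2 ∨ ((t:ℕ):ZMod 11) = 6 ∨ ((t:ℕ):ZMod 11) = 7 ∨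
       ((t:ℕ):ZMod 11) = 8 ∨ ((t:ℕ):ZMod 11) = 10) := by
    intro t
    have e2 : (((t:ℕ):ZMod 11) = 2) ↔ t % 11 = 2 := by
      rw [show (2:ZMod 11) = ((2:ℕ):ZMod 11) from by norm_num, hclass_iff t 2 (by norm_num)]
    have e6 : (((t:ℕ):ZMod 11) = 6) ↔ t % 11 = 6 := by
      rw [show (6:ZMod 11) = ((6:ℕ):ZMod 11) from by norm_num, hclass_iff t 6 (by norm_num)]
    have e7 : (((t:ℕ):ZMod 11) = 7) ↔ t % 11 = 7 := by
      rw [show (7:ZMod 11) = ((7:ℕ):ZMod 11) from by norm_num, hclass_iff t 7 (by norm_num)]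
    have e8 : (((t:ℕ):ZMod 11) = 8) ↔ t % 11 = 8 := by
      rw [show (8:ZMod 11) = ((8:ℕ):ZMod 11) from by norm_num, hclass_iff t 8 (by norm_num)]
    have e10 : (((t:ℕ):ZMod 11) = 10) ↔ t % 11 = 10 := by
      rw [show (10:ZMod 11) = ((10:ℕ):ZMod 11) from by norm_num, hclass_iff t 10 (by norm_num)]
    simp only [e2, e6, e7, e8, e10]
  have hcastT : ∀ t v : ℕ, v % 11 = 0 →
      (((t:ℤ)*((v:ℤ)-4) : ℤ) : ZMod 11) = 7 * ((t:ℕ):ZMod 11) := by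
    intro t v hv
    have hv0 : ((v:ℕ):ZMod 11) = 0 := by
      rw [show (0:ZMod 11) = ((0:ℕ):ZMod 11) from by norm_num, hclass_iff v 0 (by norm_num)]
      exact hv
    push_cast
    rw [hv0]
    have : ((0:ZMod 11) - 4) = 7 := by decide
    rw [sub_eq_iff_eq_add] at this
    ring_nf
    rw [show ((4:ZMod 11)) = -7 from by decide]
    ring
  rw [card_zmod_filter]
  have hcong : ∀ v ∈ Finset.range (11^α),
      (((((v:ℕ):ZMod (11^α)).val:ℕ):ZMod 11) = 0 ∧
        ∃ s : ZMod (11^α), s^2 = ((v:ℕ):ZMod (11^α))*(((v:ℕ):ZMod (11^α))-4))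
        ↔ (v % 11 = 0 ∧ ∃ s:ℤ, (11:ℤ)^α ∣ s^2 - (v:ℤ)*((v:ℤ)-4)) := by
    intro v _
    have hc1 : ((((v:ℕ):ZMod (11^α)).val:ℕ):ZMod 11) = 0 ↔ v % 11 = 0 := by
      rw [hcv v, show (0:ZMod 11) = ((0:ℕ):ZMod 11) from by norm_num,
        hclass_iff v 0 (by norm_num)]
    have hc2 : (∃ s : ZMod (11^α), s^2 = ((v:ℕ):ZMod (11^α))*(((v:ℕ):ZMod (11^α))-4))
        ↔ (∃ s:ℤ, (11:ℤ)^α ∣ s^2 - (v:ℤ)*((v:ℤ)-4)) := by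
      constructor
      · rintro ⟨s, hs⟩
        refine ⟨((s.val:ℕ):ℤ), ?_⟩
        have h2 : ((((s.val:ℕ):ℤ)^2 - (v:ℤ)*((v:ℤ)-4) : ℤ) : ZMod (11^α)) = 0 := by
          push_cast
          rw [ZMod.natCast_val, ZMod.cast_id]
          rw [hs]
          ring
        exact_mod_cast (ZMod.intCast_zmod_eq_zero_iff_dvd _ (11^α)).mp h2
      · rintro ⟨s, hs⟩
        refine ⟨((s:ℤ):ZMod (11^α)), ?_⟩
        have h2 : ((s^2 - (v:ℤ)*((v:ℤ)-4) : ℤ) : ZMod (11^α)) = 0 := by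
          rw [ZMod.intCast_zmod_eq_zero_iff_dvd]
          exact_mod_cast hs
        push_cast at h2
        linear_combination h2
    rw [hc1, hc2]
  rw [Finset.filter_congr hcong]
  have hTeq : (Finset.range (11^α)).filter
        (fun v : ℕ => v % 11 = 0 ∧ ∃ s:ℤ, (11:ℤ)^α ∣ s^2 - (v:ℤ)*((v:ℤ)-4))
      = insert 0 ((Finset.Icc 1 ((α-1)/2)).biUnion (fun j =>
          ((Finset.range (11^(α-2*j))).filter (fun t => t % 11 ∈ ({2,6,7,8,10}:Finset ℕ))).image
            ((fun t => 11^(2*j)*t) : ℕ → ℕ))) := by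
    ext v
    simp only [Finset.mem_filter, Finset.mem_range, Finset.mem_insert, Finset.mem_biUnion,
      Finset.mem_image, Finset.mem_Icc, Finset.mem_singleton]
    constructor
    · rintro ⟨hv, hv11, s, hs⟩
      by_cases h0 : v = 0
      · exact Or.inl h0
      right
      obtain ⟨k, t, hnt, hvkt⟩ := Nat.exists_eq_pow_mul_and_not_dvd (n := v) h0 11 (by norm_num)
      have ht0 : t ≠ 0 := by
        rintro rfl
        rw [mul_zero] at hvkt
        exact h0 hvkt
      have hk1 : 1 ≤ k := by
        by_contra hk
        have hk0 : k = 0 := by omega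
        rw [hk0, pow_zero, one_mul] at hvkt
        subst hvkt
        exact hnt (by omega)
      have hkα : k < α := by
        have h1 : 11^k ≤ v := by
          rw [hvkt]
          exact Nat.le_mul_of_pos_right _ (by omega)
        exact (Nat.pow_lt_pow_iff_right (by norm_num)).mp (lt_of_le_of_lt h1 hv)
      have hvZ : (v:ℤ) = 11^k * (t:ℤ) := by exact_mod_cast hvkt
      have hsT : (11:ℤ)^α ∣ s^2 - 11^k * ((t:ℤ)*((v:ℤ)-4)) := by
        have he : s^2 - 11^k * ((t:ℤ)*((v:ℤ)-4)) = s^2 - (v:ℤ)*((v:ℤ)-4) := by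
          rw [hvZ]; ring
        rw [he]; exact hs
      have hTnd : ¬ (11:ℤ) ∣ (t:ℤ)*((v:ℤ)-4) := by
        intro hd
        rcases hp.dvd_mul.mp hd with hd1 | hd1
        · exact hnt (by exact_mod_cast hd1)
        · have hv11' : (11:ℤ) ∣ (v:ℤ) := by
            have : (11:ℕ) ∣ v := by omega
            exact_mod_cast this
          omega
      obtain ⟨hke, c, hc⟩ := sq_stratum_fwd k α s _ (by omega) hTnd hsT
      refine ⟨k/2, ⟨by omega, by omega⟩, t, ⟨⟨?_, ?_⟩, ?_⟩⟩
      · -- t < 11^(α - 2*(k/2))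
        have he : 11^(α - 2*(k/2)) * 11^k = 11^α := by
          rw [← pow_add]
          congr 1
          omega
        by_contra hlt
        push_neg at hlt
        have : 11^α ≤ v := by
          calc 11^α = 11^(α-2*(k/2)) * 11^k := he.symm
          _ ≤ t * 11^k := Nat.mul_le_mul_right _ hlt
          _ = v := by rw [hvkt]; ring
        omega
      · -- class of t
        rw [hTmem]
        rw [← hQ7 _ (by
          intro h
          apply hnt
          have : t % 11 = 0 := by
            rw [show (0:ZMod 11) = ((0:ℕ):ZMod 11) from by norm_num] at h
            exact (hclass_iff t 0 (by norm_num)).mp h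
          omega)]
        rw [← hcastT t v hv11]
        exact (qr_iff_zmod _).mp ⟨c, hc⟩
      · rw [hvkt]
        congr 2
        omega
    · rintro (rfl | ⟨j, ⟨hj1, hj2⟩, t, ⟨htlt, htm⟩, rfl⟩)
      · refine ⟨by positivity, by norm_num, 0, by norm_num⟩
      · have hj2' : 2*j ≤ α - 1 := by omega
        have hvlt : 11^(2*j)*t < 11^α := by
          calc 11^(2*j)*t < 11^(2*j) * 11^(α-2*j) :=
                (Nat.mul_lt_mul_left (by positivity)).mpr htlt
          _ = 11^α := by rw [← pow_add]; congr 1; omega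
        have hnt : ¬ (11:ℕ) ∣ t := by
          intro hd
          omega
        have hv11 : (11^(2*j)*t) % 11 = 0 := by
          have : (11:ℕ) ∣ 11^(2*j)*t :=
            Dvd.dvd.mul_right (dvd_pow_self 11 (by omega)) t
          omega
        refine ⟨hvlt, hv11, ?_⟩
        have hTnd : ¬ (11:ℤ) ∣ (t:ℤ)*(((11^(2*j)*t : ℕ):ℤ)-4) := by
          intro hd
          rcases hp.dvd_mul.mp hd with hd1 | hd1
          · exact hnt (by exact_mod_cast hd1)
          · have hv11' : (11:ℤ) ∣ ((11^(2*j)*t : ℕ):ℤ) := by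
              have : (11:ℕ) ∣ 11^(2*j)*t := by omega
              exact_mod_cast this
            omega
        have hQR : ∃ c:ℤ, (11:ℤ) ∣ c^2 - (t:ℤ)*(((11^(2*j)*t : ℕ):ℤ)-4) := by
          rw [qr_iff_zmod, hcastT t _ hv11, hQ7 _ (by
            intro h
            apply hnt
            have : t % 11 = 0 := by
              rw [show (0:ZMod 11) = ((0:ℕ):ZMod 11) from by norm_num] at h
              exact (hclass_iff t 0 (by norm_num)).mp h
            omega)]
          rw [← hTmem]
          exact htm
        obtain ⟨s, hs⟩ := sq_stratum_bwd α (2*j) j rfl (by omega) _ hTnd hQR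
        refine ⟨s, ?_⟩
        have he : s^2 - ((11^(2*j)*t : ℕ):ℤ)*(((11^(2*j)*t : ℕ):ℤ)-4)
            = s^2 - 11^(2*j)*((t:ℤ)*(((11^(2*j)*t : ℕ):ℤ)-4)) := by
          push_cast
          ring
        rw [he]
        exact hs
  rw [hTeq]
  have h0nm : (0:ℕ) ∉ ((Finset.Icc 1 ((α-1)/2)).biUnion (fun j =>
      ((Finset.range (11^(α-2*j))).filter (fun t => t % 11 ∈ ({2,6,7,8,10}:Finset ℕ))).image
        ((fun t => 11^(2*j)*t) : ℕ → ℕ))) := by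
    simp only [Finset.mem_biUnion, Finset.mem_image, Finset.mem_filter, Finset.mem_range,
      Finset.mem_Icc, Finset.mem_insert, Finset.mem_singleton, not_exists]
    intro j hj
    obtain ⟨-, a, ⟨-, hmem⟩, he⟩ := hj
    have ha0 : a = 0 := by
      rcases Nat.mul_eq_zero.mp he with h | h
      · exact absurd h (by positivity)
      · exact h
    rw [ha0] at hmem
    omega
  have hdisj : ∀ j ∈ Finset.Icc 1 ((α-1)/2), ∀ j' ∈ Finset.Icc 1 ((α-1)/2), j ≠ j' →
      Disjoint
        (((Finset.range (11^(α-2*j))).filter (fun t => t % 11 ∈ ({2,6,7,8,10}:Finset ℕ))).image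
            ((fun t => 11^(2*j)*t) : ℕ → ℕ))
        (((Finset.range (11^(α-2*j'))).filter (fun t => t % 11 ∈ ({2,6,7,8,10}:Finset ℕ))).image
            ((fun t => 11^(2*j')*t) : ℕ → ℕ)) := by
    have key : ∀ j j' : ℕ, j < j' → ∀ t t' : ℕ, t % 11 ∈ ({2,6,7,8,10}:Finset ℕ) →
        11^(2*j)*t = 11^(2*j')*t' → False := by
      intro j j' hjj t t' hmem he
      have hsplit : (11:ℕ)^(2*j') = 11^(2*j) * 11^(2*(j'-j)) := by
        rw [← pow_add]
        congr 1
        omega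
      rw [hsplit, mul_assoc] at he
      have ht : t = 11^(2*(j'-j)) * t' := Nat.eq_of_mul_eq_mul_left (by positivity) he
      have h11t : (11:ℕ) ∣ t := by
        rw [ht]
        exact Dvd.dvd.mul_right (dvd_pow_self 11 (by omega)) t'
      simp only [Finset.mem_insert, Finset.mem_singleton] at hmem
      omega
    intro j hj j' hj' hne
    rw [Finset.disjoint_left]
    rintro a ha ha'
    simp only [Finset.mem_image, Finset.mem_filter, Finset.mem_range] at ha ha'
    obtain ⟨t, ⟨_, htm⟩, hte⟩ := ha
    obtain ⟨t', ⟨_, htm'⟩, hte'⟩ := ha'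
    rcases Nat.lt_or_ge j j' with h | h
    · exact key j j' h t t' htm (hte.trans hte'.symm)
    · have h' : j' < j := by omega
      exact key j' j h' t' t htm' (hte'.trans hte.symm)
  rw [Finset.card_insert_of_notMem h0nm, Finset.card_biUnion hdisj]
  have hsum : ∀ j ∈ Finset.Icc 1 ((α-1)/2),
      (((Finset.range (11^(α-2*j))).filter
          (fun t => t % 11 ∈ ({2,6,7,8,10}:Finset ℕ))).image
        ((fun t => 11^(2*j)*t) : ℕ → ℕ)).card = 5 * 11^(α-1-2*j) := by
    intro j hj
    simp only [Finset.mem_Icc] at hj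
    rw [Finset.card_image_of_injective _ (fun a b hab =>
        Nat.eq_of_mul_eq_mul_left (by positivity) hab),
      show (11:ℕ)^(α-2*j) = 11 * 11^(α-1-2*j) from by rw [← pow_succ']; congr 1; omega,
      count_classes ({2,6,7,8,10}:Finset ℕ) (by decide) (11^(α-1-2*j))]
    norm_num
  rw [Finset.sum_congr rfl hsum]
  omega

set_option maxHeartbeats 2000000 in
theorem main_count (α : ℕ) (hα : 1 ≤ α) :
    24 * Nat.card {m : ZMod (11^α) // ∃ n : ℕ, ((Nat.fib n : ℕ) : ZMod (11^α)) = m}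
      = 145 * 11^(α-1) + 24 - 11^((α-1) % 2) := by
  classical
  haveI : NeZero (11^α) := ⟨pow_ne_zero _ (by norm_num)⟩
  have hdvd : (11:ℕ) ∣ 11^α := dvd_pow_self 11 (by omega)
  -- get φ over ℤ
  obtain ⟨f, hqf, h8⟩ := hensel_quad (-1) (-1) 8 (by norm_num) (by norm_num) α hα
  have hq : (11:ℤ)^α ∣ f^2 - f - 1 := by
    have he : f^2 - f - 1 = f^2 + (-1)*f + (-1) := by ring
    rw [he]; exact hqf
  have h8' : (11:ℤ) ∣ f - 8 := h8
  -- get sqrt 5 over ℤ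
  obtain ⟨s5, hs5q, hs54⟩ := hensel_quad 0 (-5) 4 (by norm_num) (by norm_num) α hα
  have hs5 : (11:ℤ)^α ∣ s5^2 - 5 := by
    have he : s5^2 - 5 = s5^2 + 0*s5 + (-5) := by ring
    rw [he]; exact hs5q
  set R := ZMod (11^α)
  set π : ZMod (11^α) →+* ZMod 11 := ZMod.castHom hdvd (ZMod 11) with hπdef
  have hbr : ∀ z : ZMod (11^α), ((z.val : ℕ) : ZMod 11) = π z := by
    intro z
    rw [ZMod.natCast_val, ZMod.castHom_apply]
  set r5 : ZMod (11^α) := (s5 : ZMod (11^α)) with hr5def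
  have hr5 : r5^2 = 5 := by
    have h3 : ((s5^2 - 5 : ℤ) : ZMod (11^α)) = 0 :=
      (ZMod.intCast_zmod_eq_zero_iff_dvd _ (11^α)).mpr (by push_cast; exact_mod_cast hs5)
    push_cast at h3
    linear_combination h3
  have hπr5 : π r5 = 4 := by
    rw [hr5def, map_intCast]
    have h3 : ((s5 - 4 : ℤ) : ZMod 11) = 0 :=
      (ZMod.intCast_zmod_eq_zero_iff_dvd _ 11).mpr (by exact_mod_cast hs54)
    push_cast at h3
    linear_combination h3
  have h5i : (5:ZMod (11^α)) * (((4*11^α+1)/5 : ℕ) : ZMod (11^α)) = 1 := five_inv_aux α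
  set i5 : ZMod (11^α) := (((4*11^α+1)/5 : ℕ) : ZMod (11^α)) with hi5def
  have hr5u : r5 * (r5 * i5) = 1 := by linear_combination i5 * hr5 + h5i
  have hr5unit : IsUnit r5 := IsUnit.of_mul_eq_one _ hr5u
  -- class value bridge
  have hclass_iff : ∀ v k : ℕ, k < 11 → (((v:ℕ):ZMod 11) = ((k:ℕ):ZMod 11) ↔ v % 11 = k) := by
    intro v k hk
    rw [ZMod.natCast_eq_natCast_iff]
    unfold Nat.ModEq
    omega
  have hcv : ∀ v : ℕ, (((v : ZMod (11^α)).val : ℕ) : ZMod 11) = ((v:ℕ) : ZMod 11) := by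
    intro v
    rw [ZMod.val_natCast]
    rw [ZMod.natCast_eq_natCast_iff]
    exact (Nat.mod_modEq v (11^α)).of_dvd hdvd
  -- Step A: Nat.card to Finset card
  rw [Nat.card_eq_fintype_card, Fintype.card_subtype]
  -- Step B: characterization rewrite
  have hfilter : Finset.univ.filter (fun m : ZMod (11^α) => ∃ n : ℕ, ((Nat.fib n : ℕ) : ZMod (11^α)) = m)
      = Finset.univ.filter (fun m : ZMod (11^α) =>
          (((m.val:ℕ):ZMod 11) = 0 ∨ ((m.val:ℕ):ZMod 11) = 1 ∨ ((m.val:ℕ):ZMod 11) = 3 ∨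
            ((m.val:ℕ):ZMod 11) = 8 ∨ ((m.val:ℕ):ZMod 11) = 10) ∨
          (((m.val:ℕ):ZMod 11) = 2) ∨
          (((m.val:ℕ):ZMod 11) = 5 ∧ ∃ s : ZMod (11^α), s^2 = 5*m^2 - 4)) := by
    apply Finset.filter_congr
    intro m _
    rw [char_attained α hα f hq h8' m]
    have FA : ∀ cb sb : ZMod 11, sb^2 = 5*cb^2+4 →
        (cb = 0 ∨ cb = 1 ∨ cb = 3 ∨ cb = 8 ∨ cb = 10) := by decide
    have FB : ∀ cb : ZMod 11, (cb = 0 ∨ cb = 1 ∨ cb = 3 ∨ cb = 8 ∨ cb = 10) →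
        (5*cb^2+4 ≠ 0 ∧ IsSquare (5*cb^2+4)) := by decide
    have FC : ∀ cb : ZMod 11, cb = 2 → (5*cb^2-4 ≠ 0 ∧ IsSquare (5*cb^2-4)) := by decide
    have hval : ∀ a : ZMod (11^α), (((5*a^2+4).val:ℕ):ZMod 11) = 5*(π a)^2+4 := by
      intro a
      rw [hbr]
      simp only [map_add, map_mul, map_pow, map_ofNat]
    have hval2 : ∀ a : ZMod (11^α), (((5*a^2-4).val:ℕ):ZMod 11) = 5*(π a)^2-4 := by
      intro a
      rw [hbr]
      simp only [map_sub, map_mul, map_pow, map_ofNat]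
    constructor
    · rintro (⟨s, hs⟩ | ⟨⟨s, hs⟩, hcl⟩)
      · left
        have h7 := congrArg π hs
        simp only [map_add, map_mul, map_pow, map_ofNat] at h7
        have h9 := FA (π m) (π s) h7
        rw [hbr]
        exact h9
      · rcases hcl with h|h|h
        · left; right; left; exact h
        · right; left; exact h
        · right; right; exact ⟨h, s, hs⟩
    · rintro (hcl | h2 | ⟨h5, hsq⟩)
      · left
        apply zmod_sq_lift α hα (5*m^2+4)
        · rw [hval]
          exact (FB (π m) (by rw [← hbr]; exact hcl)).1
        · rw [hval]
          exact (FB (π m) (by rw [← hbr]; exact hcl)).2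
      · right
        refine ⟨?_, Or.inr (Or.inl h2)⟩
        apply zmod_sq_lift α hα (5*m^2-4)
        · rw [hval2]
          exact (FC (π m) (by rw [← hbr]; exact h2)).1
        · rw [hval2]
          exact (FC (π m) (by rw [← hbr]; exact h2)).2
      · right
        exact ⟨hsq, Or.inr (Or.inr h5)⟩
  rw [hfilter]
  -- Step C: split into three disjoint pieces
  have hsplit : (Finset.univ.filter (fun m : ZMod (11^α) =>
          (((m.val:ℕ):ZMod 11) = 0 ∨ ((m.val:ℕ):ZMod 11) = 1 ∨ ((m.val:ℕ):ZMod 11) = 3 ∨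
            ((m.val:ℕ):ZMod 11) = 8 ∨ ((m.val:ℕ):ZMod 11) = 10) ∨
          (((m.val:ℕ):ZMod 11) = 2) ∨
          (((m.val:ℕ):ZMod 11) = 5 ∧ ∃ s : ZMod (11^α), s^2 = 5*m^2 - 4))).card
      = (Finset.univ.filter (fun m : ZMod (11^α) =>
          (((m.val:ℕ):ZMod 11) = 0 ∨ ((m.val:ℕ):ZMod 11) = 1 ∨ ((m.val:ℕ):ZMod 11) = 3 ∨
            ((m.val:ℕ):ZMod 11) = 8 ∨ ((m.val:ℕ):ZMod 11) = 10))).card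
        + (Finset.univ.filter (fun m : ZMod (11^α) => ((m.val:ℕ):ZMod 11) = 2)).card
        + (Finset.univ.filter (fun m : ZMod (11^α) =>
            ((m.val:ℕ):ZMod 11) = 5 ∧ ∃ s : ZMod (11^α), s^2 = 5*m^2 - 4)).card := by
    have he : (Finset.univ.filter (fun m : ZMod (11^α) =>
          (((m.val:ℕ):ZMod 11) = 0 ∨ ((m.val:ℕ):ZMod 11) = 1 ∨ ((m.val:ℕ):ZMod 11) = 3 ∨
            ((m.val:ℕ):ZMod 11) = 8 ∨ ((m.val:ℕ):ZMod 11) = 10) ∨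
          (((m.val:ℕ):ZMod 11) = 2) ∨
          (((m.val:ℕ):ZMod 11) = 5 ∧ ∃ s : ZMod (11^α), s^2 = 5*m^2 - 4)))
        = ((Finset.univ.filter (fun m : ZMod (11^α) =>
          (((m.val:ℕ):ZMod 11) = 0 ∨ ((m.val:ℕ):ZMod 11) = 1 ∨ ((m.val:ℕ):ZMod 11) = 3 ∨
            ((m.val:ℕ):ZMod 11) = 8 ∨ ((m.val:ℕ):ZMod 11) = 10)))
          ∪ (Finset.univ.filter (fun m : ZMod (11^α) => ((m.val:ℕ):ZMod 11) = 2)))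
          ∪ (Finset.univ.filter (fun m : ZMod (11^α) =>
            ((m.val:ℕ):ZMod 11) = 5 ∧ ∃ s : ZMod (11^α), s^2 = 5*m^2 - 4)) := by
      ext m
      simp only [Finset.mem_filter, Finset.mem_union, Finset.mem_univ, true_and]
      tauto
    rw [he, Finset.card_union_of_disjoint, Finset.card_union_of_disjoint]
    · rw [Finset.disjoint_filter]
      intro m _ hQ hR
      rcases hQ with h|h|h|h|h <;> rw [h] at hR <;> exact absurd hR (by decide)
    · rw [Finset.disjoint_union_left]
      constructor <;> rw [Finset.disjoint_filter] <;> intro m _ hQ hR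
      · rcases hQ with h|h|h|h|h <;> rw [h] at hR <;> exact absurd hR.1 (by decide)
      · rw [hQ] at hR
        exact absurd hR.1 (by decide)
  rw [hsplit]
  -- Step D1
  have hD1 : (Finset.univ.filter (fun m : ZMod (11^α) =>
          (((m.val:ℕ):ZMod 11) = 0 ∨ ((m.val:ℕ):ZMod 11) = 1 ∨ ((m.val:ℕ):ZMod 11) = 3 ∨
            ((m.val:ℕ):ZMod 11) = 8 ∨ ((m.val:ℕ):ZMod 11) = 10))).card = 5 * 11^(α-1) := by
    rw [card_zmod_filter]
    have hcong : ∀ v ∈ Finset.range (11^α),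
        (((((v:ℕ):ZMod (11^α)).val:ℕ):ZMod 11) = 0 ∨ ((((v:ℕ):ZMod (11^α)).val:ℕ):ZMod 11) = 1 ∨
          ((((v:ℕ):ZMod (11^α)).val:ℕ):ZMod 11) = 3 ∨ ((((v:ℕ):ZMod (11^α)).val:ℕ):ZMod 11) = 8 ∨
          ((((v:ℕ):ZMod (11^α)).val:ℕ):ZMod 11) = 10)
          ↔ (v % 11 ∈ ({0,1,3,8,10}:Finset ℕ)) := by
      intro v _
      rw [hcv v]
      have e0 : (((v:ℕ):ZMod 11) = 0) ↔ v % 11 = 0 := by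
        rw [show (0:ZMod 11) = ((0:ℕ):ZMod 11) from by norm_num, hclass_iff v 0 (by norm_num)]
      have e1 : (((v:ℕ):ZMod 11) = 1) ↔ v % 11 = 1 := by
        rw [show (1:ZMod 11) = ((1:ℕ):ZMod 11) from by norm_num, hclass_iff v 1 (by norm_num)]
      have e3 : (((v:ℕ):ZMod 11) = 3) ↔ v % 11 = 3 := by
        rw [show (3:ZMod 11) = ((3:ℕ):ZMod 11) from by norm_num, hclass_iff v 3 (by norm_num)]
      have e8 : (((v:ℕ):ZMod 11) = 8) ↔ v % 11 = 8 := by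
        rw [show (8:ZMod 11) = ((8:ℕ):ZMod 11) from by norm_num, hclass_iff v 8 (by norm_num)]
      have e10 : (((v:ℕ):ZMod 11) = 10) ↔ v % 11 = 10 := by
        rw [show (10:ZMod 11) = ((10:ℕ):ZMod 11) from by norm_num, hclass_iff v 10 (by norm_num)]
      simp only [e0, e1, e3, e8, e10, Finset.mem_insert, Finset.mem_singleton]
    rw [Finset.filter_congr hcong,
      show (11:ℕ)^α = 11 * 11^(α-1) from by rw [← pow_succ']; congr 1; omega,
      count_classes ({0,1,3,8,10}:Finset ℕ) (by decide) (11^(α-1))]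
    norm_num
  have hD2 : (Finset.univ.filter (fun m : ZMod (11^α) => ((m.val:ℕ):ZMod 11) = 2)).card
      = 11^(α-1) := by
    rw [card_zmod_filter]
    have hcong : ∀ v ∈ Finset.range (11^α),
        (((((v:ℕ):ZMod (11^α)).val:ℕ):ZMod 11) = 2) ↔ (v % 11 = 2) := by
      intro v _
      rw [hcv v]
      rw [show (2:ZMod 11) = ((2:ℕ):ZMod 11) from by norm_num, hclass_iff v 2 (by norm_num)]
    rw [Finset.filter_congr hcong,
      show (11:ℕ)^α = 11 * 11^(α-1) from by rw [← pow_succ']; congr 1; omega,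
      count_class 2 (11^(α-1)) (by norm_num)]
  have hD3 : (Finset.univ.filter (fun m : ZMod (11^α) =>
            ((m.val:ℕ):ZMod 11) = 5 ∧ ∃ s : ZMod (11^α), s^2 = 5*m^2 - 4)).card
      = 1 + ∑ j ∈ Finset.Icc 1 ((α-1)/2), 5 * 11^(α-1-2*j) := by
    have hbij : (Finset.univ.filter (fun m : ZMod (11^α) =>
            ((m.val:ℕ):ZMod 11) = 5 ∧ ∃ s : ZMod (11^α), s^2 = 5*m^2 - 4)).card
        = (Finset.univ.filter (fun w : ZMod (11^α) =>
            ((w.val:ℕ):ZMod 11) = 0 ∧ ∃ s : ZMod (11^α), s^2 = w*(w-4))).card := by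
      apply Finset.card_nbij (i := fun m => r5*m+2)
      · intro m hm
        simp only [Finset.mem_coe, Finset.mem_filter, Finset.mem_univ, true_and] at hm ⊢
        obtain ⟨hm5, s, hs⟩ := hm
        rw [hbr] at hm5
        constructor
        · rw [hbr, map_add, map_mul, hπr5, hm5, map_ofNat]
          decide
        · exact ⟨s, by linear_combination hs - m^2*hr5⟩
      · intro a ha b hb hab
        have h2 := add_right_cancel hab
        exact hr5unit.mul_left_cancel h2
      · intro w hw
        simp only [Finset.coe_filter, Set.mem_setOf_eq, Finset.mem_univ, true_and] at hw
        obtain ⟨hw0, s, hs⟩ := hw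
        have hm : r5*((r5*i5)*(w-2)) + 2 = w := by linear_combination (w-2)*hr5u
        refine ⟨(r5*i5)*(w-2), ?_, hm⟩
        simp only [Finset.coe_filter, Set.mem_setOf_eq, Finset.mem_univ, true_and]
        have hr5M : r5 * ((r5*i5)*(w-2)) = w - 2 := by linear_combination (w-2)*hr5u
        have hπw : π w = 0 := by rw [← hbr]; exact hw0
        constructor
        · rw [hbr]
          have FD : ∀ a : ZMod 11, 4*a+2 = 0 → a = 5 := by decide
          apply FD
          have h7 := congrArg π hm
          rw [map_add, map_mul, hπr5, map_ofNat, hπw] at h7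
          exact h7
        · exact ⟨s, by linear_combination hs
            - (r5*((r5*i5)*(w-2)) + (w-2))*hr5M + ((r5*i5)*(w-2))^2*hr5⟩
    rw [hbij]
    exact countW α hα
  rw [hD1, hD2, hD3]
  -- Step E: arithmetic
  have hgeom := geom24 (α-1)
  have hsum : ∑ j ∈ Finset.Icc 1 ((α-1)/2), 5 * 11^(α-1-2*j)
      = 5 * ∑ j ∈ Finset.Icc 1 ((α-1)/2), 11^(α-1-2*j) := by
    rw [Finset.mul_sum]
  have hle : (11:ℕ)^((α-1) % 2) ≤ 11^(α-1) := Nat.pow_le_pow_right (by norm_num) (by omega)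
  omega

open Filter Topology

/-- The limiting density of residues attained by the Fibonacci sequence modulo `11^α`
is `145/264`. -/
theorem stmt_19 :
    Tendsto (fun α : ℕ =>
        (Nat.card {m : ZMod (11 ^ α) // ∃ n : ℕ, ((Nat.fib n : ℕ) : ZMod (11 ^ α)) = m} : ℝ)
          / (11 ^ α : ℝ))
      atTop (𝓝 (145 / 264)) := by
  have hbounds : ∀ α : ℕ, 1 ≤ α →
      (145 * 11^α ≤ 264 * Nat.card {m : ZMod (11 ^ α) // ∃ n : ℕ, ((Nat.fib n : ℕ) : ZMod (11 ^ α)) = m}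
        ∧ 264 * Nat.card {m : ZMod (11 ^ α) // ∃ n : ℕ, ((Nat.fib n : ℕ) : ZMod (11 ^ α)) = m} ≤ 145 * 11^α + 264) := by
    intro α hα
    have h24 := main_count α hα
    have hr1 : 1 ≤ (11:ℕ)^((α-1) % 2) := Nat.one_le_pow _ _ (by norm_num)
    have hr11 : (11:ℕ)^((α-1) % 2) ≤ 11 := by
      rcases Nat.mod_two_eq_zero_or_one (α-1) with h | h <;> rw [h] <;> norm_num
    have h11a : 11 * 11^(α-1) = 11^α := by
      rw [← pow_succ']
      congr 1
      omega
    omega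
  apply tendsto_of_tendsto_of_tendsto_of_le_of_le'
    (g := fun _ : ℕ => (145:ℝ)/264)
    (h := fun α : ℕ => (145:ℝ)/264 + ((1:ℝ)/11)^α)
  · exact tendsto_const_nhds
  · have h1 : Tendsto (fun α : ℕ => ((1:ℝ)/11)^α) atTop (𝓝 0) :=
      tendsto_pow_atTop_nhds_zero_of_lt_one (by norm_num) (by norm_num)
    have := tendsto_const_nhds.add h1 (α := ℕ) (f := fun _ => (145:ℝ)/264)
    simpa using this
  · filter_upwards [eventually_ge_atTop 1] with α hα
    have h := (hbounds α hα).1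
    have hA : (0:ℝ) < (11:ℝ)^α := by positivity
    rw [le_div_iff₀ hA]
    have hcast : (145:ℝ) * 11^α ≤ 264 * (Nat.card {m : ZMod (11 ^ α) // ∃ n : ℕ, ((Nat.fib n : ℕ) : ZMod (11 ^ α)) = m} : ℝ) := by
      exact_mod_cast h
    linarith
  · filter_upwards [eventually_ge_atTop 1] with α hα
    have h := (hbounds α hα).2
    have hA : (0:ℝ) < (11:ℝ)^α := by positivity
    rw [div_le_iff₀ hA]
    have hcast : 264 * (Nat.card {m : ZMod (11 ^ α) // ∃ n : ℕ, ((Nat.fib n : ℕ) : ZMod (11 ^ α)) = m} : ℝ) ≤ 145 * 11^α + 264 := by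
      exact_mod_cast h
    have hpow : ((1:ℝ)/11)^α = 1/(11:ℝ)^α := by
      rw [div_pow, one_pow]
    rw [hpow]
    have he : (145/264 + 1/(11:ℝ)^α) * (11:ℝ)^α = 145*(11:ℝ)^α/264 + 1 := by
      field_simp
    rw [he]
    linarith
end
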